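/- arXiv:1011.5691 — 4 statements merged into one kernel-verified Lean document; each statement's English description precedes it below -/
import Mathlib

section
/- Consider the cone percolation process on T_d^+ with radius of influence R. If E[d^R] > 1 + p_0, then the process survives with positive probability: P_+[V] > 0. -/
open MeasureTheory ProbabilityTheory Filter Set
open scoped ENNReal

noncomputable section

/-- Length of the longest common prefix of two lists. -/
def lcpLen {α : Type*} [DecidableEq α] : List α → List α → ℕ
  | a :: as, b :: bs => if a = b then lcpLen as bs + 1 else 0
  | _, _ => 0

/-- Graph distance on the rooted tree `T_d^+`, whose vertices are the finite words
over `Fin d` (every vertex has exactly `d` children); the root `O` is `[]`. -/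
def distPlus {d : ℕ} (u v : List (Fin d)) : ℕ :=
  (u.length - lcpLen u v) + (v.length - lcpLen u v)

/-- Vertices of the homogeneous tree `T_d`, in which every vertex has `d + 1`
neighbours: the origin `O` is `none`; any other vertex is coded by its first step
away from the origin (one of `d + 1` directions) followed by a word over `Fin d`
(after the first step, `d` directions lead away from the origin). -/
abbrev TdVertex (d : ℕ) : Type := Option (Fin (d + 1) × List (Fin d))

/-- Graph distance on the homogeneous tree `T_d`. -/
def distFull {d : ℕ} : TdVertex d → TdVertex d → ℕ
  | none, none => 0
  | none, some (_, l) => l.length + 1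
  | some (_, l), none => l.length + 1
  | some (a, l), some (b, m) =>
      if a = b then (l.length - lcpLen l m) + (m.length - lcpLen l m)
      else (l.length + 1) + (m.length + 1)

/-- The sets `I_n` of the cone percolation process with radii `r` on the tree with
vertex set `V`, graph distance `dist` and origin `o`:  `I_0 = {o}` and
`I_{n+1} = ⋃_{u ∈ I_n} B_u` where `B_u = {w : dist u w ≤ r u}`. -/
def reachSet {V : Type*} (dist : V → V → ℕ) (o : V) (r : V → ℕ) : ℕ → Set V
  | 0 => {o}
  | n + 1 => ⋃ u ∈ reachSet dist o r n, {w | dist u w ≤ r u}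

/-- `I = ⋃_{n ≥ 0} I_n`, the set of vertices that ever hear the rumour. -/
def cluster {V : Type*} (dist : V → V → ℕ) (o : V) (r : V → ℕ) : Set V :=
  ⋃ n, reachSet dist o r n

/-- The survival event `V = {|I| = ∞}`, for radii given by the random field `R`. -/
def survival {V : Type*} {Ω : Type*} (dist : V → V → ℕ) (o : V) (R : V → Ω → ℕ) : Set Ω :=
  {ω | (cluster dist o fun u => R u ω).Infinite}

namespace CPAux

variable {d K : ℕ}

abbrev Stp (d K : ℕ) : Type := Σ k : Fin K, Fin (k + 1) → Fin d

def wrd (s : Stp d K) : List (Fin d) := List.ofFn s.2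

def slen (s : Stp d K) : ℕ := s.1.1 + 1

@[simp] lemma wrd_length (s : Stp d K) : (wrd s).length = slen s := by
  simp [wrd, slen]

lemma wrd_inj {s t : Stp d K} (h : wrd s = wrd t) : s = t := by
  obtain ⟨⟨k, hk⟩, f⟩ := s
  obtain ⟨⟨l, hl⟩, g⟩ := t
  have hkl : k = l := by
    have := congrArg List.length h
    simpa [wrd] using this
  subst hkl
  have : f = g := List.ofFn_injective (by simpa [wrd] using h)
  simp [this]

def vtx (L : ℕ → Stp d K) : ℕ → List (Fin d)
  | 0 => []
  | i + 1 => vtx L i ++ wrd (L i)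

lemma vtx_length_strictMono (L : ℕ → Stp d K) : StrictMono fun i => (vtx L i).length := by
  apply strictMono_nat_of_lt_succ
  intro i
  simp only [vtx, List.length_append, wrd_length, slen]
  omega

lemma vtx_injective (L : ℕ → Stp d K) : Function.Injective (vtx L) := fun a b h =>
  (vtx_length_strictMono L).injective (by rw [h])

lemma vtx_le_length (L : ℕ → Stp d K) (i : ℕ) : i ≤ (vtx L i).length :=
  (vtx_length_strictMono L).le_apply

lemma vtx_prefix (L : ℕ → Stp d K) {i j : ℕ} (h : i ≤ j) : vtx L i <+: vtx L j := by
  induction j with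
  | zero => simp at h; simp [h]
  | succ j ih =>
    rcases Nat.eq_or_lt_of_le h with h' | h'
    · rw [h']
    · exact (ih (Nat.lt_succ_iff.mp h')).trans ⟨wrd (L j), rfl⟩

lemma vtx_congr {L L' : ℕ → Stp d K} {i : ℕ} (h : ∀ t < i, L t = L' t) :
    vtx L i = vtx L' i := by
  induction i with
  | zero => rfl
  | succ i ih =>
    simp only [vtx]
    rw [ih (fun t ht => h t (ht.trans i.lt_succ_self)), h i i.lt_succ_self]

lemma ne_of_prefix_ne {α : Type*} {a b x y : List α} (ha : a <+: x) (hb : b <+: y)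
    (hlen : a.length = b.length) (hne : a ≠ b) : x ≠ y := by
  rintro rfl
  exact hne ((List.prefix_of_prefix_length_le ha hb hlen.le).eq_of_length hlen)

lemma lcpLen_self_append {α : Type*} [DecidableEq α] (u w : List α) :
    lcpLen u (u ++ w) = u.length := by
  induction u with
  | nil => cases w <;> simp [lcpLen]
  | cons a as ih => simp [lcpLen, ih]

lemma distPlus_append (u w : List (Fin d)) : distPlus u (u ++ w) = w.length := by
  simp only [distPlus, lcpLen_self_append, List.length_append]
  omega

lemma vtx_mem_reachSet {Ω : Type*} (R : List (Fin d) → Ω → ℕ) (ω : Ω) (L : ℕ → Stp d K) (n : ℕ)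
    (h : ∀ i < n, R (vtx L i) ω = slen (L i)) :
    vtx L n ∈ reachSet distPlus ([] : List (Fin d)) (fun u => R u ω) n := by
  induction n with
  | zero => simp [reachSet, vtx]
  | succ n ih =>
    have hmem := ih (fun i hi => h i (hi.trans n.lt_succ_self))
    simp only [reachSet]
    refine Set.mem_biUnion hmem ?_
    simp only [Set.mem_setOf_eq]
    rw [show vtx L (n + 1) = vtx L n ++ wrd (L n) from rfl, distPlus_append,
      h n n.lt_succ_self, wrd_length]

end CPAux
namespace CPAux2

lemma sum_le_sum_biUnion {ι α : Type*} [DecidableEq ι] [DecidableEq α] (s : Finset ι) (t : ι → Finset α)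
    (u : Finset α) (hu : ∀ x ∈ u, ∃ i ∈ s, x ∈ t i) (f : α → ℝ≥0∞) :
    ∑ x ∈ u, f x ≤ ∑ i ∈ s, ∑ x ∈ t i, f x := by
  have hsub : u ⊆ s.biUnion t := fun x hx => Finset.mem_biUnion.mpr (hu x hx)
  refine (Finset.sum_le_sum_of_subset hsub).trans ?_
  clear hu hsub
  have hun : ∀ (u v : Finset α), ∑ x ∈ u ∪ v, f x ≤ ∑ x ∈ u, f x + ∑ x ∈ v, f x := by
    intro u v
    rw [← Finset.union_sdiff_self_eq_union, Finset.sum_union Finset.sdiff_disjoint.symm]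
    exact add_le_add_right (Finset.sum_le_sum_of_subset (Finset.sdiff_subset)) _
  induction s using Finset.induction_on with
  | empty => simp
  | insert a s ha ih =>
    rw [Finset.biUnion_insert, Finset.sum_insert ha]
    exact (hun _ _).trans (add_le_add_right ih _)

lemma geom_le (m : ℝ≥0∞) (hm : 1 < m) (hmt : m ≠ ∞) (n : ℕ) :
    ∑ t ∈ Finset.range n, m ^ t ≤ m ^ n * (m - 1)⁻¹ := by
  have hne : m - 1 ≠ 0 := by
    simp only [ne_eq, tsub_eq_zero_iff_le, not_le]
    exact hm
  have hnt : m - 1 ≠ ∞ := ENNReal.sub_ne_top hmt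
  have hkey : (m - 1)⁻¹ + 1 = m * (m - 1)⁻¹ := by
    nth_rewrite 2 [show m = (m - 1) + 1 from (tsub_add_cancel_of_le hm.le).symm]
    rw [add_mul, one_mul, ENNReal.mul_inv_cancel hne hnt, add_comm]
  induction n with
  | zero => simp
  | succ n ih =>
    rw [Finset.sum_range_succ, pow_succ]
    calc ∑ t ∈ Finset.range n, m ^ t + m ^ n ≤ m ^ n * (m - 1)⁻¹ + m ^ n := by
          exact add_le_add_left ih _
      _ = m ^ n * ((m - 1)⁻¹ + 1) := by rw [mul_add, mul_one]
      _ = m ^ n * m * (m - 1)⁻¹ := by rw [hkey, mul_assoc]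

lemma sum_pi_prod {S : Type*} [Fintype S] (k : ℕ) (w : S → ℝ≥0∞) :
    ∑ T : Fin k → S, ∏ t, w (T t) = (∑ s, w s) ^ k := by
  rw [← Fintype.prod_sum]
  simp [Finset.prod_const]

lemma half_half (x : ℝ≥0∞) : x ^ (1/2 : ℝ) * x ^ (1/2 : ℝ) = x := by
  rw [← ENNReal.rpow_add_of_nonneg _ _ (by norm_num) (by norm_num)]
  norm_num

end CPAux2

namespace CPAux2

lemma prod_range_erase (G : ℕ → ℝ≥0∞) (n j : ℕ) (hj : j < n) :
    ∏ i ∈ (Finset.range n).erase j, G i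
      = ∏ i ∈ Finset.univ.erase (⟨j, hj⟩ : Fin n), G i.1 := by
  refine Finset.prod_bij (fun (a : ℕ) (ha : a ∈ (Finset.range n).erase j) =>
      (⟨a, Finset.mem_range.mp (Finset.mem_of_mem_erase ha)⟩ : Fin n)) ?_ ?_ ?_ ?_
  · intro a ha
    refine Finset.mem_erase.mpr ⟨?_, Finset.mem_univ _⟩
    intro h
    exact (Finset.mem_erase.mp ha).1 (congrArg Fin.val h)
  · intro a ha b hb h
    exact congrArg Fin.val h
  · intro b hb
    exact ⟨b.1, Finset.mem_erase.mpr ⟨fun h => (Finset.mem_erase.mp hb).1 (Fin.ext h),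
      Finset.mem_range.mpr b.2⟩, rfl⟩
  · intro a ha
    rfl

end CPAux2

namespace CPAux3

open CPAux CPAux2

variable {d K : ℕ} {Ω : Type*} [MeasurableSpace Ω]

lemma meas_inter_eq_prod (p : ℕ → ℝ≥0∞) (P : Measure Ω) (R : List (Fin d) → Ω → ℕ)
    (hRIndep : iIndepFun R P)
    (hRDist : ∀ u k, P {ω | R u ω = k} = p k)
    (N : ℕ) (V : ℕ → List (Fin d)) (hV : Set.InjOn V (Set.Iio N)) (κ : ℕ → ℕ) :
    P (⋂ i ∈ Finset.range N, R (V i) ⁻¹' {κ i}) = ∏ i ∈ Finset.range N, p (κ i) := by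
  classical
  set κ' : List (Fin d) → ℕ := fun v => if h : ∃ i, i < N ∧ V i = v then κ h.choose else 0
    with hκ'
  have hκV : ∀ i < N, κ' (V i) = κ i := by
    intro i hi
    have hex : ∃ j, j < N ∧ V j = V i := ⟨i, hi, rfl⟩
    have h1 : hex.choose < N := hex.choose_spec.1
    have h2 : V hex.choose = V i := hex.choose_spec.2
    have h3 : hex.choose = i := hV h1 hi h2
    rw [hκ']
    simp only [dif_pos hex]
    rw [h3]
  have hset : (⋂ i ∈ Finset.range N, R (V i) ⁻¹' {κ i})
      = ⋂ v ∈ (Finset.range N).image V, R v ⁻¹' {κ' v} := by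
    ext ω
    simp only [Set.mem_iInter, Finset.mem_image, Finset.mem_range, Set.mem_preimage,
      Set.mem_singleton_iff]
    constructor
    · rintro h v ⟨i, hi, rfl⟩
      rw [hκV i hi]; exact h i hi
    · intro h i hi
      rw [← hκV i hi]; exact h (V i) ⟨i, hi, rfl⟩
  have hinj : ∀ x ∈ Finset.range N, ∀ y ∈ Finset.range N, V x = V y → x = y := by
    intro x hx y hy hxy
    exact hV (by simpa using Finset.mem_range.mp hx) (by simpa using Finset.mem_range.mp hy) hxy
  rw [hset, (iIndepFun_iff_measure_inter_preimage_eq_mul.mp hRIndep) ((Finset.range N).image V)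
      (fun v _ => measurableSet_singleton (κ' v)), Finset.prod_image hinj]
  apply Finset.prod_congr rfl
  intro i hi
  have : R (V i) ⁻¹' {κ' (V i)} = {ω | R (V i) ω = κ' (V i)} := rfl
  rw [this, hRDist, hκV i (Finset.mem_range.mp hi)]

end CPAux3

namespace CPAux3

open CPAux CPAux2

variable {d K : ℕ} {Ω : Type*} [MeasurableSpace Ω]

lemma pair_bound (p : ℕ → ℝ≥0∞) (P : Measure Ω) (R : List (Fin d) → Ω → ℕ)
    (hRIndep : iIndepFun R P)
    (hRDist : ∀ u k, P {ω | R u ω = k} = p k)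
    (n j : ℕ) (hj : j < n) (L L' : ℕ → Stp d K)
    (hagree : ∀ i < j, L i = L' i) (hne : L j ≠ L' j) :
    P ((⋂ i ∈ Finset.range n, R (vtx L i) ⁻¹' {slen (L i)}) ∩
       (⋂ i ∈ Finset.range n, R (vtx L' i) ⁻¹' {slen (L' i)}))
      ≤ (∏ i ∈ (Finset.range n).erase j, p (slen (L i))) *
        ((if slen (L j) = slen (L' j) then p (slen (L j)) else 0) *
         ∏ t ∈ Finset.range (n - 1 - j), p (slen (L' (j + 1 + t)))) := by
  classical
  have hvtxjj : vtx L j = vtx L' j := vtx_congr hagree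
  by_cases hsl : slen (L j) = slen (L' j)
  case neg =>
    have hempty : ((⋂ i ∈ Finset.range n, R (vtx L i) ⁻¹' {slen (L i)}) ∩
       (⋂ i ∈ Finset.range n, R (vtx L' i) ⁻¹' {slen (L' i)})) = ∅ := by
      apply Set.eq_empty_iff_forall_notMem.mpr
      rintro ω ⟨h1, h2⟩
      simp only [Set.mem_iInter, Finset.mem_range, Set.mem_preimage,
        Set.mem_singleton_iff] at h1 h2
      have e1 : R (vtx L j) ω = slen (L j) := h1 j hj
      have e2 : R (vtx L' j) ω = slen (L' j) := h2 j hj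
      rw [hvtxjj] at e1
      exact hsl (e1 ▸ e2 ▸ rfl)
    rw [hempty, measure_empty]
    exact zero_le
  case pos =>
    set N := n + (n - 1 - j) with hN
    set V : ℕ → List (Fin d) :=
      fun i => if i < n then vtx L i else vtx L' (j + 1 + (i - n)) with hV
    set κ : ℕ → ℕ :=
      fun i => if i < n then slen (L i) else slen (L' (j + 1 + (i - n))) with hκ
    have hlenL := vtx_length_strictMono L
    have hlenL' := vtx_length_strictMono L'
    have hL'j : ∀ i ≤ j, vtx L' i = vtx L i := fun i hi =>
      (vtx_congr (fun t ht => hagree t (lt_of_lt_of_le ht hi))).symm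
    have hcross : ∀ a b, j < a → j < b → vtx L a ≠ vtx L' b := by
      intro a b ha hb
      refine ne_of_prefix_ne (vtx_prefix L (show j + 1 ≤ a from ha))
        (vtx_prefix L' (show j + 1 ≤ b from hb)) ?_ ?_
      · show (vtx L j ++ wrd (L j)).length = (vtx L' j ++ wrd (L' j)).length
        simp [hvtxjj, slen] at hsl ⊢
        omega
      · show vtx L j ++ wrd (L j) ≠ vtx L' j ++ wrd (L' j)
        rw [← hvtxjj]
        intro hEq
        exact hne (wrd_inj (List.append_cancel_left hEq))
    have hVinj : Set.InjOn V (Set.Iio N) := by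
      have hmain : ∀ a b, a < b → b < N → V a ≠ V b := by
        intro a b hab hbN
        by_cases hbn : b < n
        · have han : a < n := hab.trans hbn
          simp only [hV, if_pos han, if_pos hbn]
          intro h
          exact absurd (hlenL.injective (congrArg List.length h)) hab.ne
        · have hbt : j + 1 + (b - n) < n := by omega
          by_cases han : a < n
          · simp only [hV, if_pos han, if_neg hbn]
            by_cases haj : a ≤ j
            · rw [← hL'j a haj]
              have hlt : a < j + 1 + (b - n) := by omega
              exact fun h => absurd (congrArg List.length h) (hlenL' hlt).ne
            · push_neg at haj
              exact hcross a _ haj (by omega)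
          · simp only [hV, if_neg han, if_neg hbn]
            have h1 : j + 1 + (a - n) < j + 1 + (b - n) := by omega
            exact fun h => absurd (congrArg List.length h) (hlenL' h1).ne
      intro a ha b hb hVab
      rcases lt_trichotomy a b with h | h | h
      · exact absurd hVab (hmain a b h hb)
      · exact h
      · exact absurd hVab.symm (hmain b a h ha)
    have hsub : ((⋂ i ∈ Finset.range n, R (vtx L i) ⁻¹' {slen (L i)}) ∩
       (⋂ i ∈ Finset.range n, R (vtx L' i) ⁻¹' {slen (L' i)}))
        ⊆ ⋂ i ∈ Finset.range N, R (V i) ⁻¹' {κ i} := by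
      rintro ω ⟨h1, h2⟩
      simp only [Set.mem_iInter, Finset.mem_range, Set.mem_preimage,
        Set.mem_singleton_iff] at h1 h2 ⊢
      intro i hiN
      by_cases hin : i < n
      · simp only [hV, hκ, if_pos hin]
        exact h1 i hin
      · simp only [hV, hκ, if_neg hin]
        exact h2 _ (by omega)
    calc P _ ≤ P (⋂ i ∈ Finset.range N, R (V i) ⁻¹' {κ i}) := measure_mono hsub
      _ = ∏ i ∈ Finset.range N, p (κ i) :=
          meas_inter_eq_prod p P R hRIndep hRDist N V hVinj κ
      _ = (∏ i ∈ Finset.range n, p (κ i)) * ∏ t ∈ Finset.range (n - 1 - j), p (κ (n + t)) := by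
          rw [hN, Finset.prod_range_add]
      _ = (∏ i ∈ Finset.range n, p (slen (L i))) *
            ∏ t ∈ Finset.range (n - 1 - j), p (slen (L' (j + 1 + t))) := by
          congr 1
          · exact Finset.prod_congr rfl fun i hi => by
              simp only [hκ, if_pos (Finset.mem_range.mp hi)]
          · exact Finset.prod_congr rfl fun t ht => by
              simp only [hκ, if_neg (by omega : ¬ n + t < n), Nat.add_sub_cancel_left]
      _ = _ := by
          rw [if_pos hsl,
            ← Finset.mul_prod_erase (Finset.range n) (fun i => p (slen (L i)))
              (Finset.mem_range.mpr hj)]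
          ring

end CPAux3

open CPAux CPAux2 CPAux3 in
/-- Cone percolation on `T_d^+` with radius of influence `R` of
distribution `p`.  If `E[d^R] = ∑_k d^k p_k > 1 + p_0` then `P_+[V] > 0`. -/
theorem conePercolation_plus_survives_of_expectation_gt
    (d : ℕ) (hd : 2 ≤ d) (p : ℕ → ℝ≥0∞) (hp0 : 0 < p 0) (hp1 : p 0 < 1)
    (Ω : Type*) [MeasurableSpace Ω] (P : Measure Ω) [IsProbabilityMeasure P]
    (R : List (Fin d) → Ω → ℕ) (hRMeas : ∀ u, Measurable (R u))
    (hRIndep : iIndepFun R P)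
    (hRDist : ∀ u k, P {ω | R u ω = k} = p k)
    (hexp : 1 + p 0 < ∑' k : ℕ, (d : ℝ≥0∞) ^ k * p k) :
    0 < P (survival distPlus ([] : List (Fin d)) R) := by
  classical
  have hple : ∀ k, p k ≤ 1 := fun k => by
    rw [← hRDist [] k]; exact prob_le_one
  have hp0top : p 0 ≠ ∞ := (hp1.trans ENNReal.one_lt_top).ne
  -- Find a finite truncation level K with supercritical mean
  obtain ⟨F, hF⟩ : ∃ F : Finset ℕ, 1 + p 0 < ∑ k ∈ F, (d : ℝ≥0∞) ^ k * p k := by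
    rw [ENNReal.tsum_eq_iSup_sum] at hexp
    exact lt_iSup_iff.mp hexp
  set K : ℕ := F.sup id with hK
  have hFsub : F ⊆ Finset.range (K + 1) := fun k hk =>
    Finset.mem_range.mpr (Nat.lt_succ_of_le (Finset.le_sup (f := id) hk))
  have hsum : 1 + p 0 < ∑ k ∈ Finset.range (K + 1), (d : ℝ≥0∞) ^ k * p k :=
    hF.trans_le (Finset.sum_le_sum_of_subset hFsub)
  set mR : ℝ≥0∞ := ∑ k ∈ Finset.range K, (d : ℝ≥0∞) ^ (k + 1) * p (k + 1) with hmR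
  have hsum' : ∑ k ∈ Finset.range (K + 1), (d : ℝ≥0∞) ^ k * p k = mR + p 0 := by
    rw [Finset.sum_range_succ']
    simp [hmR]
  have hm1R : 1 < mR := by
    rw [hsum'] at hsum
    exact (ENNReal.add_lt_add_iff_right hp0top).mp hsum
  -- the step alphabet
  set m : ℝ≥0∞ := ∑ s : Stp d K, p (slen s) with hm
  have hmmR : m = mR := by
    rw [hm, ← Finset.univ_sigma_univ, Finset.sum_sigma, hmR,
      ← Fin.sum_univ_eq_sum_range (fun k => (d : ℝ≥0∞) ^ (k + 1) * p (k + 1)) K]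
    refine Finset.sum_congr rfl fun k _ => ?_
    simp [slen, Finset.sum_const, Finset.card_univ, Fintype.card_fun, nsmul_eq_mul,
      Nat.cast_pow, mul_comm]
  have hm1 : 1 < m := hmmR ▸ hm1R
  have hmtop : m ≠ ∞ := by
    rw [hm]
    refine (ENNReal.sum_lt_top.mpr fun s _ => ?_).ne
    exact lt_of_le_of_lt (hple _) ENNReal.one_lt_top
  have hm0 : m ≠ 0 := fun h => by simp [h] at hm1
  haveI hSne : Nonempty (Stp d K) := by
    by_contra h
    haveI : IsEmpty (Stp d K) := not_nonempty_iff.mp h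
    rw [hm, Finset.univ_eq_empty, Finset.sum_empty] at hm1
    exact absurd hm1 (by simp)
  set m₂ : ℝ≥0∞ := ∑ s : Stp d K, (d : ℝ≥0∞) ^ (slen s) * p (slen s) with hm₂
  have hm₂top : m₂ ≠ ∞ := by
    rw [hm₂]
    refine (ENNReal.sum_lt_top.mpr fun s _ => ?_).ne
    exact ENNReal.mul_lt_top (ENNReal.pow_lt_top (by simp)) (lt_of_le_of_lt (hple _) ENNReal.one_lt_top)
  -- sum of the `g` weight over second coordinate
  have hgsum : ∀ s : Stp d K,
      (∑ s' : Stp d K, if slen s = slen s' then p (slen s) else 0)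
        = (d : ℝ≥0∞) ^ (slen s) * p (slen s) := by
    intro s
    rw [← Finset.univ_sigma_univ, Finset.sum_sigma]
    have hstep : ∀ k : Fin K,
        (∑ f : Fin (k.1 + 1) → Fin d, if slen s = slen (⟨k, f⟩ : Stp d K) then p (slen s) else 0)
          = if k = s.1 then (d : ℝ≥0∞) ^ (slen s) * p (slen s) else 0 := by
      intro k
      by_cases hk : k = s.1
      · rw [if_pos hk]
        have hc : ∀ f : Fin (k.1 + 1) → Fin d, slen s = slen (⟨k, f⟩ : Stp d K) := by
          intro f; simp [slen, hk]
        rw [Finset.sum_congr rfl (fun f _ => if_pos (hc f)), Finset.sum_const,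
          Finset.card_univ, Fintype.card_fun, Fintype.card_fin, nsmul_eq_mul, Nat.cast_pow]
        congr 2
        simp [slen, hk]
      · rw [if_neg hk]
        refine Finset.sum_eq_zero fun f _ => if_neg fun hcon => hk ?_
        simp only [slen] at hcon
        exact Fin.ext (by omega)
    rw [Finset.sum_congr rfl (fun k _ => hstep k), Finset.sum_ite_eq' Finset.univ s.1]
    simp
  -- the extension operator and events
  set ex : ∀ n, (Fin n → Stp d K) → ℕ → Stp d K :=
    fun n L i => if h : i < n then L ⟨i, h⟩ else Classical.arbitrary _ with hex
  have hexlt : ∀ n (L : Fin n → Stp d K) (i : Fin n), ex n L i.1 = L i := by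
    intro n L i
    simp [hex, i.isLt]
  set Ev : ∀ _ : ℕ, (ℕ → Stp d K) → Set Ω :=
    fun n M => ⋂ i ∈ Finset.range n, R (vtx M i) ⁻¹' {slen (M i)} with hEv
  have hEvMeas : ∀ n M, MeasurableSet (Ev n M) := fun n M =>
    Set.Finite.measurableSet_biInter (Finset.finite_toSet _)
      (fun i _ => hRMeas _ (measurableSet_singleton _))
  have hmemEv : ∀ n M (ω : Ω), ω ∈ Ev n M ↔ ∀ i < n, R (vtx M i) ω = slen (M i) := by
    intro n M ω
    simp [hEv]
  have hPEv : ∀ n (M : ℕ → Stp d K), P (Ev n M) = ∏ i ∈ Finset.range n, p (slen (M i)) :=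
    fun n M => meas_inter_eq_prod p P R hRIndep hRDist n (vtx M)
      ((vtx_injective M).injOn) (fun i => slen (M i))
  set A : ℕ → Set Ω := fun n => ⋃ L : Fin n → Stp d K, Ev n (ex n L) with hA
  have hAMeas : ∀ n, MeasurableSet (A n) := fun n =>
    MeasurableSet.iUnion (fun L => hEvMeas _ _)
  set CC : ℝ≥0∞ := 1 + m₂ * (m - 1)⁻¹ with hCC
  have hCCtop : CC ≠ ∞ := by
    refine ENNReal.add_ne_top.mpr ⟨ENNReal.one_ne_top, ENNReal.mul_ne_top hm₂top ?_⟩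
    rw [ENNReal.inv_ne_top]
    simp only [ne_eq, tsub_eq_zero_iff_le, not_le]
    exact hm1
  have hCC0 : CC ≠ 0 := by
    intro h
    rw [hCC, add_eq_zero] at h
    exact one_ne_zero h.1
  have hlow : ∀ n, CC⁻¹ ≤ P (A n) := by
    intro n
    set Z : Ω → ℝ≥0∞ := fun ω => ∑ L : Fin n → Stp d K, (Ev n (ex n L)).indicator 1 ω with hZ
    have hZmeas : Measurable Z :=
      Finset.measurable_sum _ (fun L _ => (measurable_one.indicator (hEvMeas _ _)))
    have hprod : ∀ L : Fin n → Stp d K,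
        ∏ i ∈ Finset.range n, p (slen (ex n L i)) = ∏ i : Fin n, p (slen (L i)) := by
      intro L
      rw [← Fin.prod_univ_eq_prod_range (fun i => p (slen (ex n L i))) n]
      exact Finset.prod_congr rfl fun i _ => by rw [hexlt n L i]
    have hsumPEv : ∑ L : Fin n → Stp d K, P (Ev n (ex n L)) = m ^ n := by
      calc ∑ L : Fin n → Stp d K, P (Ev n (ex n L))
          = ∑ L : Fin n → Stp d K, ∏ i : Fin n, p (slen (L i)) :=
            Finset.sum_congr rfl fun L _ => by rw [hPEv, hprod]
        _ = m ^ n := by rw [sum_pi_prod n (fun s => p (slen s)), ← hm]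
    have hZ1 : ∫⁻ ω, Z ω ∂P = m ^ n := by
      simp only [hZ]
      rw [lintegral_finset_sum _ (fun L _ => measurable_one.indicator (hEvMeas _ _))]
      rw [← hsumPEv]
      exact Finset.sum_congr rfl fun L _ => lintegral_indicator_one (hEvMeas _ _)
    have hZZ : ∫⁻ ω, Z ω * Z ω ∂P
        = ∑ q : (Fin n → Stp d K) × (Fin n → Stp d K),
            P (Ev n (ex n q.1) ∩ Ev n (ex n q.2)) := by
      have hpt : ∀ ω, Z ω * Z ω = ∑ q : (Fin n → Stp d K) × (Fin n → Stp d K),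
          ((Ev n (ex n q.1) ∩ Ev n (ex n q.2)).indicator 1 ω) := by
        intro ω
        simp only [hZ]
        rw [Finset.sum_mul_sum, ← Fintype.sum_prod_type']
        exact Finset.sum_congr rfl fun q _ => by
          rw [Set.inter_indicator_one]; rfl
      rw [lintegral_congr hpt, lintegral_finset_sum _
        (fun q _ => measurable_one.indicator ((hEvMeas _ _).inter (hEvMeas _ _)))]
      exact Finset.sum_congr rfl fun q _ =>
        lintegral_indicator_one ((hEvMeas _ _).inter (hEvMeas _ _))
    -- diagonal part
    have hdiag : ∑ q ∈ Finset.univ.filter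
        (fun q : (Fin n → Stp d K) × (Fin n → Stp d K) => q.1 = q.2),
        P (Ev n (ex n q.1) ∩ Ev n (ex n q.2)) = m ^ n := by
      have himg : Finset.univ.filter
          (fun q : (Fin n → Stp d K) × (Fin n → Stp d K) => q.1 = q.2)
          = Finset.image (fun L : Fin n → Stp d K => (L, L)) Finset.univ := by
        ext q
        simp only [Finset.mem_filter, Finset.mem_univ, true_and, Finset.mem_image]
        obtain ⟨a, b⟩ := q
        constructor
        · intro h
          simp only at h
          exact ⟨a, by rw [h]⟩
        · rintro ⟨L, hL⟩
          have h1 : L = a := congrArg Prod.fst hL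
          have h2 : L = b := congrArg Prod.snd hL
          simp only
          rw [← h1, ← h2]
      rw [himg, Finset.sum_image (fun x _ y _ h => by simpa using (congrArg Prod.fst h))]
      simp only [Set.inter_self]
      exact hsumPEv
    -- off-diagonal: divergence classes
    set Dj : ℕ → Finset ((Fin n → Stp d K) × (Fin n → Stp d K)) := fun j =>
      Finset.univ.filter (fun q => (∀ i : Fin n, i.1 < j → q.1 i = q.2 i) ∧
        ∃ h : j < n, q.1 ⟨j, h⟩ ≠ q.2 ⟨j, h⟩) with hDj
    have hcover : ∀ q ∈ Finset.univ.filter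
        (fun q : (Fin n → Stp d K) × (Fin n → Stp d K) => ¬ q.1 = q.2),
        ∃ j ∈ Finset.range n, q ∈ Dj j := by
      intro q hq
      rw [Finset.mem_filter] at hq
      obtain ⟨i, hi⟩ := Function.ne_iff.mp hq.2
      have hP : ∃ t, ∃ h : t < n, q.1 ⟨t, h⟩ ≠ q.2 ⟨t, h⟩ := ⟨i.1, i.2, by simpa using hi⟩
      obtain ⟨hjn, hjne⟩ := Nat.find_spec hP
      refine ⟨Nat.find hP, Finset.mem_range.mpr hjn, ?_⟩
      rw [hDj]
      simp only [Finset.mem_filter, Finset.mem_univ, true_and]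
      refine ⟨?_, hjn, hjne⟩
      intro i' hi'
      by_contra hcon
      exact Nat.find_min hP hi' ⟨i'.2, by simpa using hcon⟩
    have hoff : ∀ j ∈ Finset.range n,
        (∑ q ∈ Dj j, P (Ev n (ex n q.1) ∩ Ev n (ex n q.2)))
          ≤ m₂ * m ^ (n - 1) * m ^ (n - 1 - j) := by
      intro j hjr
      have hj : j < n := Finset.mem_range.mp hjr
      set B : ((Fin n → Stp d K) × (Fin n → Stp d K)) → ℝ≥0∞ := fun q =>
        (∏ i ∈ (Finset.range n).erase j, p (slen (ex n q.1 i))) *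
        ((if slen (ex n q.1 j) = slen (ex n q.2 j) then p (slen (ex n q.1 j)) else 0) *
         ∏ t ∈ Finset.range (n - 1 - j), p (slen (ex n q.2 (j + 1 + t)))) with hB
      have hqB : ∀ q ∈ Dj j, P (Ev n (ex n q.1) ∩ Ev n (ex n q.2)) ≤ B q := by
        intro q hq
        rw [hDj] at hq
        simp only [Finset.mem_filter, Finset.mem_univ, true_and] at hq
        obtain ⟨hag, hjn', hne'⟩ := hq
        simp only [hEv, hB]
        refine pair_bound p P R hRIndep hRDist n j hj (ex n q.1) (ex n q.2) ?_ ?_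
        · intro i hij
          have hin : i < n := hij.trans hj
          simp only [hex, dif_pos hin]
          exact hag ⟨i, hin⟩ hij
        · simp only [hex, dif_pos hj]
          exact hne'
      refine (Finset.sum_le_sum hqB).trans ?_
      set φ : ((Fin n → Stp d K) × (Fin n → Stp d K)) →
          ((Fin n → Stp d K) × (Stp d K × (Fin (n - 1 - j) → Stp d K))) := fun q =>
        (q.1, (q.2 ⟨j, hj⟩, fun t => q.2 ⟨j + 1 + t.1, by have := t.2; omega⟩)) with hφ
      set F : ((Fin n → Stp d K) × (Stp d K × (Fin (n - 1 - j) → Stp d K))) → ℝ≥0∞ := fun x =>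
        (∏ i ∈ (Finset.range n).erase j, p (slen (ex n x.1 i))) *
        ((if slen (x.1 ⟨j, hj⟩) = slen x.2.1 then p (slen (x.1 ⟨j, hj⟩)) else 0) *
         ∏ t : Fin (n - 1 - j), p (slen (x.2.2 t))) with hF
      have hBF : ∀ q ∈ Dj j, B q = F (φ q) := by
        intro q hq
        rw [hDj] at hq
        simp only [Finset.mem_filter, Finset.mem_univ, true_and] at hq
        simp only [hB, hF, hφ]
        congr 1
        congr 1
        · simp only [hex, dif_pos hj]
        · rw [← Fin.prod_univ_eq_prod_range
            (fun t => p (slen (ex n q.2 (j + 1 + t)))) (n - 1 - j)]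
          exact Finset.prod_congr rfl fun t _ => by
            simp only [hex, dif_pos (show j + 1 + t.1 < n by have := t.2; omega)]
      have hφinj : ∀ q ∈ Dj j, ∀ q' ∈ Dj j, φ q = φ q' → q = q' := by
        intro q hq q' hq' heq
        rw [hDj] at hq hq'
        simp only [Finset.mem_filter, Finset.mem_univ, true_and] at hq hq'
        simp only [hφ, Prod.mk.injEq] at heq
        obtain ⟨h1, h2, h3⟩ := heq
        refine Prod.ext h1 (funext fun i => ?_)
        rcases lt_trichotomy i.1 j with hlt | heqj | hgt
        · rw [← hq.1 i hlt, ← hq'.1 i hlt, h1]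
        · have : i = ⟨j, hj⟩ := Fin.ext heqj
          rw [this, h2]
        · have hi2 := i.2
          have ht : i.1 - j - 1 < n - 1 - j := by omega
          have : i = ⟨j + 1 + (i.1 - j - 1), by omega⟩ := Fin.ext (by simp; omega)
          rw [this]
          exact congrFun h3 ⟨i.1 - j - 1, ht⟩
      calc ∑ q ∈ Dj j, B q = ∑ q ∈ Dj j, F (φ q) := Finset.sum_congr rfl hBF
        _ = ∑ y ∈ (Dj j).image φ, F y := (Finset.sum_image hφinj).symm
        _ ≤ ∑ y, F y := Finset.sum_le_sum_of_subset (Finset.subset_univ _)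
        _ = m₂ * m ^ (n - 1) * m ^ (n - 1 - j) := by
          rw [Fintype.sum_prod_type]
          have hInner : ∀ L : Fin n → Stp d K,
              (∑ z : Stp d K × (Fin (n - 1 - j) → Stp d K), F (L, z))
                = ((∏ i ∈ (Finset.range n).erase j, p (slen (ex n L i))) *
                  ((d : ℝ≥0∞) ^ (slen (L ⟨j, hj⟩)) * p (slen (L ⟨j, hj⟩)))) *
                    m ^ (n - 1 - j) := by
            intro L
            rw [Fintype.sum_prod_type]
            have h1 : ∀ s' : Stp d K,
                (∑ T : Fin (n - 1 - j) → Stp d K, F (L, (s', T)))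
                  = (∏ i ∈ (Finset.range n).erase j, p (slen (ex n L i))) *
                    ((if slen (L ⟨j, hj⟩) = slen s' then p (slen (L ⟨j, hj⟩)) else 0) *
                      m ^ (n - 1 - j)) := by
              intro s'
              simp only [hF]
              rw [← Finset.mul_sum, ← Finset.mul_sum,
                sum_pi_prod (n - 1 - j) (fun s => p (slen s)), ← hm]
            rw [Finset.sum_congr rfl (fun s' _ => h1 s'), ← Finset.mul_sum]
            have h2 : (∑ s' : Stp d K,
                (if slen (L ⟨j, hj⟩) = slen s' then p (slen (L ⟨j, hj⟩)) else 0) *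
                  m ^ (n - 1 - j))
                = ((d : ℝ≥0∞) ^ (slen (L ⟨j, hj⟩)) * p (slen (L ⟨j, hj⟩))) *
                    m ^ (n - 1 - j) := by
              rw [← Finset.sum_mul, hgsum (L ⟨j, hj⟩)]
            rw [h2, ← mul_assoc]
          rw [Finset.sum_congr rfl (fun L _ => hInner L), ← Finset.sum_mul]
          congr 1
          -- ∑ L, (∏ erase) * h-term = m₂ * m ^ (n-1)
          set c : Fin n → Stp d K → ℝ≥0∞ := fun i s =>
            if i = (⟨j, hj⟩ : Fin n) then (d : ℝ≥0∞) ^ (slen s) * p (slen s)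
            else p (slen s) with hc
          have h3 : ∀ L : Fin n → Stp d K,
              (∏ i ∈ (Finset.range n).erase j, p (slen (ex n L i))) *
                ((d : ℝ≥0∞) ^ (slen (L ⟨j, hj⟩)) * p (slen (L ⟨j, hj⟩)))
                = ∏ i : Fin n, c i (L i) := by
            intro L
            rw [← Finset.mul_prod_erase Finset.univ (fun i => c i (L i))
              (Finset.mem_univ (⟨j, hj⟩ : Fin n))]
            rw [mul_comm]
            congr 1
            · simp only [hc, if_pos rfl]
            · rw [prod_range_erase (fun i => p (slen (ex n L i))) n j hj]
              refine Finset.prod_congr rfl fun i hi => ?_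
              rw [hexlt n L i]
              simp only [hc, if_neg (Finset.mem_erase.mp hi).1]
          rw [Finset.sum_congr rfl (fun L _ => h3 L)]
          rw [← Fintype.prod_sum c]
          rw [← Finset.mul_prod_erase Finset.univ (fun i => ∑ s : Stp d K, c i s)
            (Finset.mem_univ (⟨j, hj⟩ : Fin n))]
          have h4 : (∑ s : Stp d K, c (⟨j, hj⟩ : Fin n) s) = m₂ := by
            simp only [hc, if_pos rfl]
            rfl
          have h5 : ∏ i ∈ Finset.univ.erase (⟨j, hj⟩ : Fin n), (∑ s : Stp d K, c i s)
              = m ^ (n - 1) := by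
            have : ∀ i ∈ Finset.univ.erase (⟨j, hj⟩ : Fin n),
                (∑ s : Stp d K, c i s) = m := by
              intro i hi
              simp only [hc, if_neg (Finset.mem_erase.mp hi).1]
              rfl
            rw [Finset.prod_congr rfl this, Finset.prod_const,
              Finset.card_erase_of_mem (Finset.mem_univ _), Finset.card_univ,
              Fintype.card_fin]
          rw [h4, h5]
    -- assemble second moment bound
    have hZZle : ∫⁻ ω, Z ω * Z ω ∂P ≤ CC * (m ^ n * m ^ n) := by
      rw [hZZ, ← Finset.sum_filter_add_sum_filter_not Finset.univ
        (fun q : (Fin n → Stp d K) × (Fin n → Stp d K) => q.1 = q.2)]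
      have hoffsum : ∑ q ∈ Finset.univ.filter
          (fun q : (Fin n → Stp d K) × (Fin n → Stp d K) => ¬ q.1 = q.2),
          P (Ev n (ex n q.1) ∩ Ev n (ex n q.2))
            ≤ m₂ * (m - 1)⁻¹ * (m ^ n * m ^ n) := by
        refine (sum_le_sum_biUnion (Finset.range n) Dj _ hcover _).trans ?_
        refine (Finset.sum_le_sum hoff).trans ?_
        calc ∑ j ∈ Finset.range n, m₂ * m ^ (n - 1) * m ^ (n - 1 - j)
            = m₂ * m ^ (n - 1) * ∑ j ∈ Finset.range n, m ^ (n - 1 - j) := by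
              rw [Finset.mul_sum]
          _ = m₂ * m ^ (n - 1) * ∑ j ∈ Finset.range n, m ^ j := by
              rw [Finset.sum_range_reflect (fun j => m ^ j) n]
          _ ≤ m₂ * m ^ (n - 1) * (m ^ n * (m - 1)⁻¹) :=
              mul_le_mul_right (geom_le m hm1 hmtop n) _
          _ ≤ m₂ * m ^ n * (m ^ n * (m - 1)⁻¹) :=
              mul_le_mul_left (mul_le_mul_right
                (pow_le_pow_right' hm1.le (Nat.sub_le n 1)) _) _
          _ = m₂ * (m - 1)⁻¹ * (m ^ n * m ^ n) := by ring
      have hdle : ∑ q ∈ Finset.univ.filter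
          (fun q : (Fin n → Stp d K) × (Fin n → Stp d K) => q.1 = q.2),
          P (Ev n (ex n q.1) ∩ Ev n (ex n q.2)) ≤ 1 * (m ^ n * m ^ n) := by
        rw [hdiag, one_mul]
        calc m ^ n = m ^ n * 1 := (mul_one _).symm
          _ ≤ m ^ n * m ^ n := mul_le_mul_right (one_le_pow_of_one_le' hm1.le n) _
      calc _ ≤ 1 * (m ^ n * m ^ n) + m₂ * (m - 1)⁻¹ * (m ^ n * m ^ n) :=
            add_le_add hdle hoffsum
        _ = CC * (m ^ n * m ^ n) := by rw [hCC, add_mul]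
    -- Cauchy–Schwarz / Paley–Zygmund
    have hZind : ∀ ω, Z ω = Z ω * (A n).indicator 1 ω := by
      intro ω
      by_cases hω : ω ∈ A n
      · rw [Set.indicator_of_mem hω, Pi.one_apply, mul_one]
      · have hz : Z ω = 0 := by
          simp only [hZ]
          refine Finset.sum_eq_zero fun L _ => Set.indicator_of_notMem
            (fun hmem => hω ?_) _
          rw [hA]
          exact Set.mem_iUnion.mpr ⟨L, hmem⟩
        rw [hz, zero_mul]
    have hconj : Real.HolderConjugate 2 2 := Real.HolderConjugate.two_two
    have hCS := ENNReal.lintegral_mul_le_Lp_mul_Lq P hconj hZmeas.aemeasurable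
      ((measurable_one.indicator (hAMeas n)).aemeasurable)
    have hps : ∫⁻ ω, ((A n).indicator (1 : Ω → ℝ≥0∞) ω) ^ (2 : ℝ) ∂P = P (A n) := by
      have hpt : ∀ ω, ((A n).indicator (1 : Ω → ℝ≥0∞) ω) ^ (2 : ℝ)
          = (A n).indicator 1 ω := by
        intro ω
        by_cases hω : ω ∈ A n
        · rw [Set.indicator_of_mem hω, Pi.one_apply, ENNReal.one_rpow]
        · rw [Set.indicator_of_notMem hω, ENNReal.zero_rpow_of_pos (by norm_num)]
      rw [lintegral_congr hpt, lintegral_indicator_one (hAMeas n)]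
    have hZsq : ∫⁻ ω, Z ω ^ (2 : ℝ) ∂P = ∫⁻ ω, Z ω * Z ω ∂P := by
      refine lintegral_congr fun ω => ?_
      rw [show (2 : ℝ) = ((2 : ℕ) : ℝ) by norm_num, ENNReal.rpow_natCast, sq]
    have h1 : ∫⁻ ω, Z ω ∂P ≤ (∫⁻ ω, Z ω * Z ω ∂P) ^ (1/2 : ℝ) * (P (A n)) ^ (1/2 : ℝ) := by
      calc ∫⁻ ω, Z ω ∂P = ∫⁻ ω, (Z ω * (A n).indicator 1 ω) ∂P := lintegral_congr hZind
        _ ≤ (∫⁻ ω, Z ω ^ (2 : ℝ) ∂P) ^ (1/2 : ℝ) *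
            (∫⁻ ω, ((A n).indicator (1 : Ω → ℝ≥0∞) ω) ^ (2 : ℝ) ∂P) ^ (1/2 : ℝ) := by
            simpa using hCS
        _ = (∫⁻ ω, Z ω * Z ω ∂P) ^ (1/2 : ℝ) * (P (A n)) ^ (1/2 : ℝ) := by
            rw [hZsq, hps]
    have hkey : m ^ n * m ^ n ≤ (∫⁻ ω, Z ω * Z ω ∂P) * P (A n) := by
      calc m ^ n * m ^ n = (∫⁻ ω, Z ω ∂P) * (∫⁻ ω, Z ω ∂P) := by rw [hZ1]
        _ ≤ ((∫⁻ ω, Z ω * Z ω ∂P) ^ (1/2 : ℝ) * (P (A n)) ^ (1/2 : ℝ)) *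
            ((∫⁻ ω, Z ω * Z ω ∂P) ^ (1/2 : ℝ) * (P (A n)) ^ (1/2 : ℝ)) :=
            mul_le_mul' h1 h1
        _ = ((∫⁻ ω, Z ω * Z ω ∂P) ^ (1/2 : ℝ) * (∫⁻ ω, Z ω * Z ω ∂P) ^ (1/2 : ℝ)) *
            ((P (A n)) ^ (1/2 : ℝ) * (P (A n)) ^ (1/2 : ℝ)) := by ring
        _ = (∫⁻ ω, Z ω * Z ω ∂P) * P (A n) := by rw [half_half, half_half]
    have hfinal : 1 ≤ CC * P (A n) := by
      have h2 : m ^ n * m ^ n ≤ CC * (m ^ n * m ^ n) * P (A n) :=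
        hkey.trans (mul_le_mul_left hZZle _)
      have hD0 : (m ^ n * m ^ n) ≠ 0 := mul_ne_zero (pow_ne_zero _ hm0) (pow_ne_zero _ hm0)
      have hDtop : (m ^ n * m ^ n) ≠ ∞ :=
        ENNReal.mul_ne_top (ENNReal.pow_ne_top hmtop) (ENNReal.pow_ne_top hmtop)
      rw [show CC * (m ^ n * m ^ n) * P (A n) = (CC * P (A n)) * (m ^ n * m ^ n) by ring] at h2
      nth_rewrite 1 [show (m ^ n * m ^ n) = 1 * (m ^ n * m ^ n) by rw [one_mul]] at h2
      exact (ENNReal.mul_le_mul_iff_left hD0 hDtop).mp h2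
    calc CC⁻¹ = CC⁻¹ * 1 := (mul_one _).symm
      _ ≤ CC⁻¹ * (CC * P (A n)) := mul_le_mul_right hfinal _
      _ = (CC⁻¹ * CC) * P (A n) := (mul_assoc _ _ _).symm
      _ = P (A n) := by rw [ENNReal.inv_mul_cancel hCC0 hCCtop, one_mul]
  -- decreasing events
  have hAanti : Antitone A := by
    apply antitone_nat_of_succ_le
    intro n ω hω
    obtain ⟨L', hL'⟩ := Set.mem_iUnion.mp hω
    refine Set.mem_iUnion.mpr ⟨fun i => L' i.castSucc, ?_⟩
    rw [hmemEv] at hL' ⊢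
    intro i hi
    have hagree : ∀ t, t < n → ex n (fun i => L' i.castSucc) t = ex (n + 1) L' t := by
      intro t ht
      simp only [hex, dif_pos ht, dif_pos (ht.trans n.lt_succ_self)]
      rfl
    rw [vtx_congr (fun t ht => hagree t (ht.trans hi)), hagree i hi]
    exact hL' i (hi.trans n.lt_succ_self)
  have hiInter : CC⁻¹ ≤ P (⋂ n, A n) := by
    rw [hAanti.measure_iInter (fun n => (hAMeas n).nullMeasurableSet)
      ⟨0, measure_ne_top P _⟩]
    exact le_iInf hlow
  have hsurv : (⋂ n, A n) ⊆ survival distPlus ([] : List (Fin d)) R := by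
    intro ω hω
    simp only [Set.mem_iInter] at hω
    show (cluster distPlus ([] : List (Fin d)) fun u => R u ω).Infinite
    have hgrow : ∀ n, ∃ x ∈ cluster distPlus ([] : List (Fin d)) (fun u => R u ω),
        n ≤ x.length := by
      intro n
      obtain ⟨L, hL⟩ := Set.mem_iUnion.mp (hω n)
      rw [hmemEv] at hL
      exact ⟨vtx (ex n L) n, Set.mem_iUnion.mpr ⟨n, vtx_mem_reachSet R ω _ n hL⟩,
        vtx_le_length _ n⟩
    by_contra hfin
    rw [Set.not_infinite] at hfin
    obtain ⟨b, hb⟩ := (hfin.image List.length).bddAbove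
    obtain ⟨x, hx, hxlen⟩ := hgrow (b + 1)
    have : x.length ≤ b := hb (Set.mem_image_of_mem _ hx)
    omega
  calc (0 : ℝ≥0∞) < CC⁻¹ := ENNReal.inv_pos.mpr hCCtop
    _ ≤ P (⋂ n, A n) := hiInter
    _ ≤ P (survival distPlus ([] : List (Fin d)) R) := measure_mono hsurv
end
end

section
/- Fix integers n ≥ 1 and j ≥ 0. In the heterogeneous cone percolation process on T_d^+, the probability ρ_j^n = P[V^n_{u,v}] (for any fixed pair u ≤ v with dist(O,u) = jn and dist(O,v) = (j+1)n) satisfies ρ_j^n ≥ ∏_{k=0}^{n−1} [ 1 − ∏_{i=0}^{k} P[R_{jn+i} < k+1−i] ]. -/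
open MeasureTheory ProbabilityTheory Filter Set
open scoped ENNReal

noncomputable section

/-- The event `V^n_{u,v}` that the process restarted from `u` alone reaches
`v = u ++ w` in at most `n = w.length` steps:  writing `u_i = u ++ w.take i` for the
path from `u` to `v`, it is `⋂_{k=0}^{n-1} ⋃_{i=0}^{k} {R̄_{u_i} ≥ k + 1 - i}`. -/
def reachEvent {d : ℕ} {Ω : Type*} (R : List (Fin d) → Ω → ℕ) (u w : List (Fin d)) : Set Ω :=
  ⋂ k ∈ Finset.range w.length, ⋃ i ∈ Finset.range (k + 1),
    {ω | k + 1 - i ≤ R (u ++ w.take i) ω}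

lemma hp_mul_ineq {a b c e : ℝ≥0∞} (hcd : c ≤ e) :
    a * e + (a + b) * c ≤ a * c + (a + b) * e := by
  calc a * e + (a + b) * c = (a * c + a * e) + b * c := by ring
    _ ≤ (a * c + a * e) + b * e := by gcongr
    _ = a * c + (a + b) * e := by ring

lemma hp_key {a b c e : ℝ≥0∞} (hab : a ≤ b) (hcd : c ≤ e) :
    a * e + b * c ≤ a * c + b * e := by
  obtain ⟨f, rfl⟩ : ∃ f, b = a + f := ⟨b - a, (add_tsub_cancel_of_le hab).symm⟩
  exact hp_mul_ineq hcd

lemma harris_nat (μ : Measure ℕ) [IsProbabilityMeasure μ] {f g : ℕ → ℝ≥0∞}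
    (hf : Monotone f) (hg : Monotone g) :
    (∫⁻ x, f x ∂μ) * ∫⁻ x, g x ∂μ ≤ ∫⁻ x, f x * g x ∂μ := by
  have hfm : Measurable f := measurable_from_nat
  have hgm : Measurable g := measurable_from_nat
  have key : ∀ x y : ℕ, f x * g y + f y * g x ≤ f x * g x + f y * g y := by
    intro x y
    rcases le_total x y with h | h
    · exact hp_key (hf h) (hg h)
    · have := hp_key (hf h) (hg h)
      calc f x * g y + f y * g x = f y * g x + f x * g y := by ring
        _ ≤ f y * g y + f x * g x := this
        _ = f x * g x + f y * g y := by ring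
  have h2 : 2 * ((∫⁻ x, f x ∂μ) * ∫⁻ x, g x ∂μ) ≤ 2 * ∫⁻ x, f x * g x ∂μ := by
    have lhs : ∫⁻ x, ∫⁻ y, (f x * g y + f y * g x) ∂μ ∂μ
        = 2 * ((∫⁻ x, f x ∂μ) * ∫⁻ x, g x ∂μ) := by
      have inner : ∀ x, ∫⁻ y, (f x * g y + f y * g x) ∂μ
          = f x * (∫⁻ y, g y ∂μ) + (∫⁻ y, f y ∂μ) * g x := by
        intro x
        rw [lintegral_add_left (hgm.const_mul _), lintegral_const_mul _ hgm,
          lintegral_mul_const _ hfm]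
      simp only [inner]
      rw [lintegral_add_left (hfm.mul_const _), lintegral_mul_const _ hfm,
        lintegral_const_mul _ hgm]
      ring
    have rhs : ∫⁻ x, ∫⁻ y, (f x * g x + f y * g y) ∂μ ∂μ
        = 2 * ∫⁻ x, f x * g x ∂μ := by
      have inner : ∀ x, ∫⁻ y, (f x * g x + f y * g y) ∂μ
          = f x * g x + ∫⁻ y, f y * g y ∂μ := by
        intro x
        rw [lintegral_add_left measurable_const, lintegral_const, measure_univ, mul_one]
      simp only [inner]
      rw [lintegral_add_right _ measurable_const, lintegral_const, measure_univ, mul_one]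
      ring
    rw [← lhs, ← rhs]
    exact lintegral_mono fun x => lintegral_mono fun y => key x y
  exact (ENNReal.mul_le_mul_iff_right (by norm_num) (by norm_num)).mp h2

lemma monotone_insertNth_zero {n : ℕ} {x x' : ℕ} {p p' : Fin n → ℕ}
    (hx : x ≤ x') (hp : p ≤ p') :
    (Fin.insertNth 0 x p : Fin (n + 1) → ℕ) ≤ Fin.insertNth 0 x' p' := by
  intro j
  induction j using Fin.cases with
  | zero => simpa using hx
  | succ j =>
    have h1 : (Fin.succ j) = (0 : Fin (n + 1)).succAbove j :=
      (congrFun Fin.succAbove_zero j).symm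
    rw [h1, Fin.insertNth_apply_succAbove, Fin.insertNth_apply_succAbove]
    exact hp j

lemma harris_pi : ∀ (n : ℕ) (μ : Fin n → Measure ℕ), (∀ i, IsProbabilityMeasure (μ i)) →
    ∀ (f g : (Fin n → ℕ) → ℝ≥0∞), Monotone f → Monotone g →
    (∫⁻ x, f x ∂Measure.pi μ) * (∫⁻ x, g x ∂Measure.pi μ)
      ≤ ∫⁻ x, f x * g x ∂Measure.pi μ := by
  intro n
  induction n with
  | zero =>
    intro μ hμ f g hf hg
    haveI := hμ
    have hconst : ∀ h : (Fin 0 → ℕ) → ℝ≥0∞, ∫⁻ x, h x ∂Measure.pi μ = h default := by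
      intro h
      have : h = fun _ => h default := funext fun x => by rw [Subsingleton.elim x default]
      rw [this, lintegral_const, measure_univ, mul_one]
    rw [hconst, hconst, hconst]
  | succ n IH =>
    intro μ hμ f g hf hg
    haveI := hμ
    set μ' : Fin n → Measure ℕ := fun j => μ ((0 : Fin (n + 1)).succAbove j) with hμ'
    haveI : ∀ j, IsProbabilityMeasure (μ' j) := fun j => hμ _
    have hpres := measurePreserving_piFinSuccAbove μ 0
    set e := MeasurableEquiv.piFinSuccAbove (fun _ : Fin (n + 1) => ℕ) 0 with he
    have hesymm : ∀ (x : ℕ) (y : Fin n → ℕ), e.symm (x, y) = Fin.insertNth 0 x y :=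
      fun x y => rfl
    have hint : ∀ h : (Fin (n + 1) → ℕ) → ℝ≥0∞,
        ∫⁻ a, h a ∂Measure.pi μ
          = ∫⁻ x, ∫⁻ y, h (Fin.insertNth 0 x y) ∂Measure.pi μ' ∂μ 0 := by
      intro h
      have h1 : ∫⁻ a, h a ∂Measure.pi μ
          = ∫⁻ b, h (e.symm b) ∂((μ 0).prod (Measure.pi μ')) := by
        rw [← hpres.lintegral_comp (measurable_of_countable _)]
        simp only [MeasurableEquiv.symm_apply_apply]
      rw [h1, lintegral_prod _ (measurable_of_countable _).aemeasurable]
      simp only [hesymm]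
    set F : ℕ → ℝ≥0∞ := fun x => ∫⁻ y, f (Fin.insertNth 0 x y) ∂Measure.pi μ' with hF
    set G : ℕ → ℝ≥0∞ := fun x => ∫⁻ y, g (Fin.insertNth 0 x y) ∂Measure.pi μ' with hG
    have hFmono : Monotone F := fun x x' hx =>
      lintegral_mono fun y => hf (monotone_insertNth_zero hx le_rfl)
    have hGmono : Monotone G := fun x x' hx =>
      lintegral_mono fun y => hg (monotone_insertNth_zero hx le_rfl)
    calc (∫⁻ x, f x ∂Measure.pi μ) * ∫⁻ x, g x ∂Measure.pi μ
        = (∫⁻ x, F x ∂μ 0) * ∫⁻ x, G x ∂μ 0 := by rw [hint f, hint g]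
      _ ≤ ∫⁻ x, F x * G x ∂μ 0 := harris_nat (μ 0) hFmono hGmono
      _ ≤ ∫⁻ x, ∫⁻ y, f (Fin.insertNth 0 x y) * g (Fin.insertNth 0 x y)
            ∂Measure.pi μ' ∂μ 0 := by
          refine lintegral_mono fun x => ?_
          exact IH μ' (fun j => hμ _) _ _
            (fun y y' hy => hf (monotone_insertNth_zero le_rfl hy))
            (fun y y' hy => hg (monotone_insertNth_zero le_rfl hy))
      _ = ∫⁻ x, f x * g x ∂Measure.pi μ := (hint fun a => f a * g a).symm

lemma harris_pi_prod (n : ℕ) (μ : Fin n → Measure ℕ) [hμ : ∀ i, IsProbabilityMeasure (μ i)]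
    {β : Type*} (s : Finset β) (f : β → (Fin n → ℕ) → ℝ≥0∞)
    (hmono : ∀ b ∈ s, Monotone (f b)) :
    ∏ b ∈ s, ∫⁻ x, f b x ∂Measure.pi μ ≤ ∫⁻ x, ∏ b ∈ s, f b x ∂Measure.pi μ := by
  classical
  induction s using Finset.induction with
  | empty => simp [lintegral_const]
  | @insert a s ha IH =>
    have hprodmono : Monotone fun x => ∏ b ∈ s, f b x := fun x y hxy =>
      Finset.prod_le_prod' fun b hb => hmono b (Finset.mem_insert_of_mem hb) hxy
    calc ∏ b ∈ insert a s, ∫⁻ x, f b x ∂Measure.pi μ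
        = (∫⁻ x, f a x ∂Measure.pi μ) * ∏ b ∈ s, ∫⁻ x, f b x ∂Measure.pi μ :=
          Finset.prod_insert ha
      _ ≤ (∫⁻ x, f a x ∂Measure.pi μ) * ∫⁻ x, ∏ b ∈ s, f b x ∂Measure.pi μ := by
          gcongr
          exact IH fun b hb => hmono b (Finset.mem_insert_of_mem hb)
      _ ≤ ∫⁻ x, f a x * ∏ b ∈ s, f b x ∂Measure.pi μ :=
          harris_pi n μ hμ _ _ (hmono a (Finset.mem_insert_self a s)) hprodmono
      _ = ∫⁻ x, ∏ b ∈ insert a s, f b x ∂Measure.pi μ := by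
          simp [Finset.prod_insert ha]

lemma indep_preimage_prod {Ω ι ι' : Type*} [MeasurableSpace Ω] {P : Measure Ω}
    {R : ι → Ω → ℕ} (hR : iIndepFun R P)
    [Fintype ι'] (v : ι' → ι) (hv : Function.Injective v) (s : ι' → Set ℕ) :
    P (⋂ i, R (v i) ⁻¹' s i) = ∏ i, P (R (v i) ⁻¹' s i) := by
  classical
  set t : ι → Set Ω := fun l =>
    if h : ∃ i, v i = l then R l ⁻¹' s h.choose else Set.univ with ht
  have htv : ∀ i : ι', t (v i) = R (v i) ⁻¹' s i := by
    intro i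
    have h : ∃ i', v i' = v i := ⟨i, rfl⟩
    have hch : h.choose = i := hv h.choose_spec
    simp only [ht, dif_pos h, hch]
  have h1 : (⋂ i, R (v i) ⁻¹' s i) = ⋂ l ∈ Finset.univ.image v, t l := by
    ext ω
    simp only [Set.mem_iInter, Finset.mem_image, Finset.mem_univ, true_and]
    constructor
    · rintro h l ⟨i, rfl⟩
      rw [htv i]; exact h i
    · intro h i
      have := h (v i) ⟨i, rfl⟩
      rwa [htv i] at this
  have h2 := hR.meas_biInter (S := Finset.univ.image v) (s := t) ?_
  · rw [h1, h2, Finset.prod_image fun a _ b _ hab => hv hab]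
    exact Finset.prod_congr rfl fun i _ => by rw [htv i]
  · intro l hl
    simp only [Finset.mem_image, Finset.mem_univ, true_and] at hl
    obtain ⟨i, rfl⟩ := hl
    rw [htv i]
    exact ⟨s i, .of_discrete, rfl⟩

theorem heterogeneousConePercolation_reach_prob_lower_bound'
    (d : ℕ) (hd : 2 ≤ d) (ν : ℕ → Measure ℕ) [∀ z, IsProbabilityMeasure (ν z)]
    (hν : ∀ z, ν z {0} < 1)
    (Ω : Type*) [MeasurableSpace Ω] (P : Measure Ω) [IsProbabilityMeasure P]
    (R : List (Fin d) → Ω → ℕ) (hRMeas : ∀ u, Measurable (R u))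
    (hRIndep : iIndepFun R P)
    (hRDist : ∀ u, Measure.map (R u) P = ν u.length)
    (n j : ℕ) (hn : 1 ≤ n) (u w : List (Fin d)) (hu : u.length = j * n)
    (hw : w.length = n) :
    ∏ k ∈ Finset.range n,
        (1 - ∏ i ∈ Finset.range (k + 1), ν (j * n + i) {x | x < k + 1 - i})
      ≤ P (reachEvent R u w) := by
  classical
  set v : Fin n → List (Fin d) := fun i => u ++ w.take i with hv
  have hvlen : ∀ i : Fin n, (v i).length = j * n + i := by
    intro i
    have := i.isLt
    simp only [hv, List.length_append, List.length_take, hw, hu]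
    omega
  have hvinj : Function.Injective v := by
    intro a b hab
    have h := congrArg List.length hab
    rw [hvlen a, hvlen b] at h
    exact Fin.ext (by omega)
  set X : Ω → (Fin n → ℕ) := fun ω i => R (v i) ω with hX
  have hXmeas : Measurable X := measurable_pi_lambda _ fun i => hRMeas _
  set μpi := Measure.pi (fun i : Fin n => ν (j * n + (i : ℕ))) with hμpi
  haveI : IsProbabilityMeasure μpi := by rw [hμpi]; infer_instance
  have hmeas_all : ∀ t : Set (Fin n → ℕ), MeasurableSet t := fun t =>
    t.to_countable.measurableSet
  have hmap : Measure.map X P = μpi := by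
    rw [hμpi]
    refine (Measure.pi_eq fun s hs => ?_).symm
    rw [Measure.map_apply hXmeas (MeasurableSet.univ_pi hs)]
    have hpre : X ⁻¹' Set.pi Set.univ s = ⋂ i, R (v i) ⁻¹' s i := by
      ext ω
      simp only [Set.mem_preimage, Set.mem_pi, Set.mem_univ, true_implies, Set.mem_iInter, hX]
    rw [hpre, indep_preimage_prod hRIndep v hvinj s]
    refine Finset.prod_congr rfl fun i _ => ?_
    rw [← Measure.map_apply (hRMeas _) (hs i), hRDist, hvlen i]
  set A : ℕ → Set (Fin n → ℕ) :=
    fun k => {y | ∃ i : Fin n, (i : ℕ) ≤ k ∧ k + 1 - (i : ℕ) ≤ y i} with hA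
  set E : Set (Fin n → ℕ) := ⋂ k ∈ Finset.range n, A k with hE
  have hreach : reachEvent R u w = X ⁻¹' E := by
    ext ω
    simp only [reachEvent, Set.mem_iInter, Set.mem_iUnion, Set.mem_setOf_eq,
      Finset.mem_range, Set.mem_preimage, hE, hA, hX, hw]
    constructor
    · intro h k hk
      obtain ⟨i, hik, hRi⟩ := h k hk
      have hik' : i ≤ k := Nat.lt_succ_iff.mp hik
      exact ⟨⟨i, by omega⟩, hik', hRi⟩
    · intro h k hk
      obtain ⟨i, hik, hRi⟩ := h k hk
      exact ⟨(i : ℕ), Nat.lt_succ_iff.mpr hik, hRi⟩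
  have hPE : P (reachEvent R u w) = μpi E := by
    rw [hreach, ← hmap, Measure.map_apply hXmeas (hmeas_all E)]
  rw [hPE]
  have hupper : ∀ k, Monotone ((A k).indicator (1 : (Fin n → ℕ) → ℝ≥0∞)) := by
    intro k x y hxy
    by_cases hx : x ∈ A k
    · have hy : y ∈ A k := by
        obtain ⟨i, hik, hxi⟩ := hx
        exact ⟨i, hik, le_trans hxi (hxy i)⟩
      rw [Set.indicator_of_mem hx, Set.indicator_of_mem hy]; exact le_rfl
    · rw [Set.indicator_of_notMem hx]; exact zero_le
  have hprod_ind : ∀ x, ∏ k ∈ Finset.range n, (A k).indicator (1 : (Fin n → ℕ) → ℝ≥0∞) x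
      = E.indicator 1 x := by
    intro x
    by_cases hx : x ∈ E
    · rw [Set.indicator_of_mem hx]
      have h1 : ∀ k ∈ Finset.range n, (A k).indicator (1 : (Fin n → ℕ) → ℝ≥0∞) x = 1 := by
        intro k hk
        have hxk : x ∈ A k := by
          rw [hE] at hx
          exact Set.mem_iInter₂.mp hx k hk
        rw [Set.indicator_of_mem hxk]; rfl
      rw [Finset.prod_congr rfl h1, Finset.prod_const_one]; rfl
    · rw [Set.indicator_of_notMem hx]
      have h1 : ∃ k ∈ Finset.range n, x ∉ A k := by
        by_contra hcon
        push_neg at hcon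
        exact hx (by rw [hE]; exact Set.mem_iInter₂.mpr hcon)
      obtain ⟨k, hk, hxk⟩ := h1
      exact Finset.prod_eq_zero hk (by rw [Set.indicator_of_notMem hxk])
  have hind_int : ∀ t : Set (Fin n → ℕ), ∫⁻ x, t.indicator 1 x ∂μpi = μpi t := fun t =>
    lintegral_indicator_one (hmeas_all t)
  have hfactor : ∀ k, k < n →
      μpi (A k) = 1 - ∏ i ∈ Finset.range (k + 1), ν (j * n + i) {x | x < k + 1 - i} := by
    intro k hk
    set s : Fin n → Set ℕ :=
      fun i => if (i : ℕ) ≤ k then {x | x < k + 1 - (i : ℕ)} else Set.univ with hs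
    have hcompl : (A k)ᶜ = Set.pi Set.univ s := by
      ext y
      simp only [Set.mem_compl_iff, hA, Set.mem_setOf_eq, not_exists, not_and, not_le,
        Set.mem_pi, Set.mem_univ, true_implies, hs]
      constructor
      · intro h i
        by_cases hik : (i : ℕ) ≤ k
        · rw [if_pos hik]; exact h i hik
        · rw [if_neg hik]; trivial
      · intro h i hik
        have := h i
        rwa [if_pos hik] at this
    have hAc : μpi ((A k)ᶜ)
        = ∏ i ∈ Finset.range (k + 1), ν (j * n + i) {x | x < k + 1 - i} := by
      rw [hcompl, hμpi, Measure.pi_pi]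
      have hfi : ∀ i : Fin n, ν (j * n + (i : ℕ)) (s i)
          = (fun m => if m ≤ k then ν (j * n + m) {x | x < k + 1 - m} else 1) (i : ℕ) := by
        intro i
        by_cases hik : (i : ℕ) ≤ k
        · simp only [hs, if_pos hik]
        · simp only [hs, if_neg hik, measure_univ]
      rw [Finset.prod_congr rfl fun i _ => hfi i,
        Fin.prod_univ_eq_prod_range
          (fun m => if m ≤ k then ν (j * n + m) {x | x < k + 1 - m} else 1) n,
        ← Finset.prod_subset (Finset.range_subset_range.mpr hk)
          (fun m _ hnm => if_neg fun hle => hnm (Finset.mem_range.mpr (by omega)))]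
      exact Finset.prod_congr rfl fun m hm => if_pos (Nat.lt_succ_iff.mp (Finset.mem_range.mp hm))
    have h2 := prob_compl_eq_one_sub (μ := μpi) (hmeas_all ((A k)ᶜ))
    rw [compl_compl] at h2
    rw [h2, hAc]
  calc ∏ k ∈ Finset.range n,
        (1 - ∏ i ∈ Finset.range (k + 1), ν (j * n + i) {x | x < k + 1 - i})
      = ∏ k ∈ Finset.range n, μpi (A k) :=
        Finset.prod_congr rfl fun k hk => (hfactor k (Finset.mem_range.mp hk)).symm
    _ = ∏ k ∈ Finset.range n, ∫⁻ x, (A k).indicator 1 x ∂μpi :=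
        Finset.prod_congr rfl fun k _ => (hind_int (A k)).symm
    _ ≤ ∫⁻ x, ∏ k ∈ Finset.range n, (A k).indicator 1 x ∂μpi := by
        rw [hμpi]
        exact harris_pi_prod n _ (Finset.range n) _ fun k _ => hupper k
    _ = ∫⁻ x, E.indicator 1 x ∂μpi := by simp only [hprod_ind]
    _ = μpi E := hind_int E

/-- Heterogeneous cone percolation on `T_d^+`: the radius of a vertex
at distance `z` from the root has law `ν z`.  Fix `n ≥ 1` and `j ≥ 0`.  For any
pair `u ≤ v` with `dist(O, u) = j n` and `dist(O, v) = (j+1) n` (that is, `v = u ++ w`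
with `w.length = n`), the probability `ρ_j^n = P[V^n_{u,v}]` satisfies
`ρ_j^n ≥ ∏_{k=0}^{n-1} [1 - ∏_{i=0}^{k} P[R_{jn+i} < k+1-i]]`. -/
theorem heterogeneousConePercolation_reach_prob_lower_bound
    (d : ℕ) (hd : 2 ≤ d) (ν : ℕ → Measure ℕ) [∀ z, IsProbabilityMeasure (ν z)]
    (hν : ∀ z, ν z {0} < 1)
    (Ω : Type*) [MeasurableSpace Ω] (P : Measure Ω) [IsProbabilityMeasure P]
    (R : List (Fin d) → Ω → ℕ) (hRMeas : ∀ u, Measurable (R u))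
    (hRIndep : iIndepFun R P)
    (hRDist : ∀ u, Measure.map (R u) P = ν u.length)
    (n j : ℕ) (hn : 1 ≤ n) (u w : List (Fin d)) (hu : u.length = j * n)
    (hw : w.length = n) :
    ∏ k ∈ Finset.range n,
        (1 - ∏ i ∈ Finset.range (k + 1), ν (j * n + i) {x | x < k + 1 - i})
      ≤ P (reachEvent R u w) := by
  exact heterogeneousConePercolation_reach_prob_lower_bound' d hd ν hν Ω P R hRMeas hRIndep hRDist n j hn u w hu hw
end
end

section
/- Consider the cone percolation process on T_d with geometric radius of influence, P[R = k] = (1 − p) p^k for k = 0,1,2,..., where 0 < p < 1. If d p² − 2dp + 1 < 0, then P[V] > 0. -/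
open MeasureTheory ProbabilityTheory Filter Set
open scoped ENNReal

noncomputable section

set_option linter.unusedSectionVars false

namespace ConePerc

variable {d K n : ℕ}

/-- blocks: nonempty words over `Fin d` of length at most `K`. -/
abbrev Bk (d K : ℕ) : Type := (k : Fin K) × (Fin (k.1 + 1) → Fin d)

def toW (b : Bk d K) : List (Fin d) := List.ofFn b.2

lemma length_toW (b : Bk d K) : (toW b).length = b.1.1 + 1 := by simp [toW]

lemma toW_injective : Function.Injective (toW (d := d) (K := K)) := by
  rintro ⟨k, f⟩ ⟨k', f'⟩ h
  have hl : k.1 + 1 = k'.1 + 1 := by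
    have := congrArg List.length h
    simpa [toW] using this
  have hk : k = k' := Fin.ext (by omega)
  subst hk
  have : f = f' := List.ofFn_injective h
  simp [this]

def vtx (w : Fin n → Bk d K) : ℕ → List (Fin d)
  | 0 => []
  | i + 1 => if h : i < n then vtx w i ++ toW (w ⟨i, h⟩) else vtx w i

lemma vtx_succ (w : Fin n → Bk d K) {i : ℕ} (h : i < n) :
    vtx w (i + 1) = vtx w i ++ toW (w ⟨i, h⟩) := by
  simp [vtx, h]

lemma le_length_vtx (w : Fin n → Bk d K) : ∀ i, i ≤ n → i ≤ (vtx w i).length := by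
  intro i
  induction i with
  | zero => simp
  | succ i ih =>
    intro hi
    have h : i < n := by omega
    rw [vtx_succ w h]
    have := ih (by omega)
    have := length_toW (w ⟨i, h⟩)
    simp only [List.length_append]
    omega

lemma length_vtx_lt (w : Fin n → Bk d K) {i j : ℕ} (hij : i < j) (hj : j ≤ n) :
    (vtx w i).length < (vtx w j).length := by
  induction j with
  | zero => omega
  | succ j ih =>
    have hjn : j < n := by omega
    rw [vtx_succ w hjn]
    simp only [List.length_append]
    have := length_toW (w ⟨j, hjn⟩)
    rcases Nat.lt_or_ge i j with h | h
    · have := ih h (by omega); omega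
    · have : i = j := by omega
      subst this; omega

lemma vtx_prefix (w : Fin n → Bk d K) {i j : ℕ} (hij : i ≤ j) :
    vtx w i <+: vtx w j := by
  induction j with
  | zero => simp_all
  | succ j ih =>
    rcases Nat.lt_or_ge i (j + 1) with h | h
    · have h1 : vtx w i <+: vtx w j := ih (by omega)
      by_cases hjn : j < n
      · rw [vtx_succ w hjn]; exact h1.trans (List.prefix_append _ _)
      · simpa [vtx, hjn] using h1
    · have : i = j + 1 := by omega
      subst this; exact List.prefix_rfl

lemma vtx_congr {w w' : Fin n → Bk d K} {j : ℕ}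
    (h : ∀ i : Fin n, i.1 < j → w i = w' i) : ∀ i ≤ j, vtx w i = vtx w' i := by
  intro i hi
  induction i with
  | zero => simp [vtx]
  | succ i ih =>
    by_cases hin : i < n
    · rw [vtx_succ w hin, vtx_succ w' hin, ih (by omega), h ⟨i, hin⟩ hi]
    · simp only [vtx, dif_neg hin]
      exact ih (by omega)

lemma vtx_ne_of_branch {w w' : Fin n → Bk d K} {j : Fin n}
    (hagree : ∀ i : Fin n, i.1 < j.1 → w i = w' i) (hne : w j ≠ w' j)
    (hlen : (w j).1 = (w' j).1) (i t : Fin n) (ht : j < t) :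
    vtx w i.1 ≠ vtx w' t.1 := by
  have hqq : vtx w j.1 = vtx w' j.1 := vtx_congr hagree j.1 le_rfl
  rcases Nat.lt_or_ge j.1 i.1 with hij | hij
  · -- i beyond branch point
    intro heq
    have h1 : vtx w (j.1 + 1) <+: vtx w i.1 := vtx_prefix w (by omega)
    have h2 : vtx w' (j.1 + 1) <+: vtx w' t.1 := vtx_prefix w' (by omega)
    rw [vtx_succ w j.isLt, Fin.eta] at h1
    rw [vtx_succ w' j.isLt, Fin.eta] at h2
    rw [heq, hqq] at h1
    have hlen' : (vtx w' j.1 ++ toW (w j)).length = (vtx w' j.1 ++ toW (w' j)).length := by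
      simp only [List.length_append, length_toW, hlen]
    have hpre : vtx w' j.1 ++ toW (w j) <+: vtx w' j.1 ++ toW (w' j) :=
      List.prefix_of_prefix_length_le h1 h2 (le_of_eq hlen')
    have heq2 : vtx w' j.1 ++ toW (w j) = vtx w' j.1 ++ toW (w' j) :=
      hpre.eq_of_length hlen'
    exact hne (toW_injective (List.append_cancel_left heq2))
  · -- i at or before branch point : lengths differ
    intro heq
    have hl1 : (vtx w i.1).length ≤ (vtx w j.1).length :=
      (vtx_prefix w hij).length_le
    have hl2 : (vtx w' j.1).length < (vtx w' t.1).length :=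
      length_vtx_lt w' ht (le_of_lt t.isLt)
    rw [hqq] at hl1
    rw [heq] at hl1
    omega

def wrd (x : List (Fin d)) : TdVertex d := some (0, x)

lemma wrd_injective : Function.Injective (wrd (d := d)) := by
  intro a b h; simpa [wrd] using h

lemma wrd_ne_none (x : List (Fin d)) : wrd x ≠ none := by simp [wrd]

lemma lcpLen_self_append (x y : List (Fin d)) : lcpLen x (x ++ y) = x.length := by
  induction x with
  | nil => simp [lcpLen]
  | cons a as ih => simp [lcpLen, ih]

lemma distFull_wrd (x y : List (Fin d)) : distFull (wrd x) (wrd (x ++ y)) = y.length := by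
  simp only [wrd, distFull, if_pos rfl, lcpLen_self_append, List.length_append, if_true]
  omega

lemma distFull_none_wrd (x : List (Fin d)) : distFull none (wrd x) = x.length + 1 := rfl


def SKset (K k : ℕ) : Set ℕ := if k < K then {k} else Set.Ici k

def Pk (p : ℝ) (K k : ℕ) : ℝ := if k < K then (1 - p) * p ^ k else p ^ k

lemma Pk_nonneg {p : ℝ} (hp0 : 0 < p) (hp1 : p < 1) (K k : ℕ) : 0 ≤ Pk p K k := by
  have h1p : (0:ℝ) ≤ 1 - p := by linarith
  have hpk : (0:ℝ) ≤ p ^ k := by positivity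
  unfold Pk; split
  · exact mul_nonneg h1p hpk
  · exact hpk

lemma SKset_subset_Ici (K k : ℕ) : SKset K k ⊆ Set.Ici k := by
  unfold SKset; split
  · intro r hr; simp_all
  · exact le_refl _

lemma SKset_disjoint {K k k' : ℕ} (hkK : k ≤ K) (hk'K : k' ≤ K) (hne : k ≠ k') :
    SKset K k ∩ SKset K k' = ∅ := by
  ext r
  simp only [Set.mem_inter_iff, Set.mem_empty_iff_false, iff_false, not_and, SKset]
  split <;> split <;> simp only [Set.mem_singleton_iff, Set.mem_Ici] <;> intro h1 <;> omega

section Prob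

variable {Ω : Type*} [MeasurableSpace Ω] (P : Measure Ω) [IsProbabilityMeasure P]
  {d : ℕ} (R : TdVertex d → Ω → ℕ) {p : ℝ}

lemma master (hRIndep : iIndepFun R P)
    (F : Finset (TdVertex d)) (c : TdVertex d → Set ℕ) :
    P (⋂ u ∈ F, R u ⁻¹' c u) = ∏ u ∈ F, P (R u ⁻¹' c u) :=
  hRIndep.measure_inter_preimage_eq_mul F (fun _ _ => .of_discrete)

lemma master2 (hRIndep : iIndepFun R P)
    (F G : Finset (TdVertex d)) (hFG : Disjoint F G) (cF cG : TdVertex d → Set ℕ) :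
    P ((⋂ u ∈ F, R u ⁻¹' cF u) ∩ ⋂ u ∈ G, R u ⁻¹' cG u)
      = (∏ u ∈ F, P (R u ⁻¹' cF u)) * ∏ u ∈ G, P (R u ⁻¹' cG u) := by
  classical
  have h1 : (⋂ u ∈ F, R u ⁻¹' cF u) = ⋂ u ∈ F, R u ⁻¹' (if u ∈ F then cF u else cG u) :=
    Set.iInter₂_congr fun u hu => by rw [if_pos hu]
  have h2 : (⋂ u ∈ G, R u ⁻¹' cG u) = ⋂ u ∈ G, R u ⁻¹' (if u ∈ F then cF u else cG u) :=
    Set.iInter₂_congr fun u hu => by rw [if_neg (Finset.disjoint_right.mp hFG hu)]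
  have h3 : ∀ u ∈ F, P (R u ⁻¹' cF u) = P (R u ⁻¹' (if u ∈ F then cF u else cG u)) :=
    fun u hu => by rw [if_pos hu]
  have h4 : ∀ u ∈ G, P (R u ⁻¹' cG u) = P (R u ⁻¹' (if u ∈ F then cF u else cG u)) :=
    fun u hu => by rw [if_neg (Finset.disjoint_right.mp hFG hu)]
  rw [h1, h2, Finset.prod_congr rfl h3, Finset.prod_congr rfl h4]
  rw [← Finset.prod_union hFG, ← master P R hRIndep (F ∪ G)]
  congr 1
  ext ω
  simp only [Set.mem_inter_iff, Set.mem_iInter, Finset.mem_union]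
  constructor
  · rintro ⟨hF, hG⟩ u h
    rcases h with h | h
    exacts [hF u h, hG u h]
  · intro h
    exact ⟨fun u hu => h u (Or.inl hu), fun u hu => h u (Or.inr hu)⟩

lemma tailP (hRMeas : ∀ u, Measurable (R u))
    (hRDist : ∀ u k, P {ω | R u ω = k} = ENNReal.ofReal ((1 - p) * p ^ k))
    (hp0 : 0 < p) (hp1 : p < 1) (u : TdVertex d) (k : ℕ) :
    P {ω | k ≤ R u ω} = ENNReal.ofReal (p ^ k) := by
  have hset : {ω | k ≤ R u ω} = ⋃ i : ℕ, {ω | R u ω = k + i} := by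
    ext ω
    simp only [Set.mem_setOf_eq, Set.mem_iUnion]
    constructor
    · intro h; exact ⟨R u ω - k, by omega⟩
    · rintro ⟨i, hi⟩; omega
  have hdisj : Pairwise (Function.onFun Disjoint fun i : ℕ => {ω | R u ω = k + i}) := by
    intro i j hij
    simp only [Function.onFun, Set.disjoint_left]
    intro ω h1 h2
    simp only [Set.mem_setOf_eq] at h1 h2
    omega
  have hmeas : ∀ i : ℕ, MeasurableSet {ω | R u ω = k + i} := fun i =>
    (hRMeas u) (MeasurableSet.of_discrete (s := {k + i}))
  have h1p : (0:ℝ) ≤ 1 - p := by linarith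
  have hnn : ∀ i : ℕ, 0 ≤ (1 - p) * p ^ (k + i) := fun i => mul_nonneg h1p (by positivity)
  have hsummand : (fun i : ℕ => (1 - p) * p ^ (k + i)) = fun i => ((1 - p) * p ^ k) * p ^ i := by
    funext i; rw [pow_add]; ring
  have hsum : Summable fun i : ℕ => (1 - p) * p ^ (k + i) := by
    rw [hsummand]
    exact (summable_geometric_of_lt_one hp0.le hp1).mul_left _
  calc P {ω | k ≤ R u ω} = ∑' i : ℕ, P {ω | R u ω = k + i} := by
        rw [hset, measure_iUnion hdisj hmeas]
    _ = ∑' i : ℕ, ENNReal.ofReal ((1 - p) * p ^ (k + i)) := by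
        congr 1; funext i; exact hRDist u (k + i)
    _ = ENNReal.ofReal (∑' i : ℕ, (1 - p) * p ^ (k + i)) :=
        (ENNReal.ofReal_tsum_of_nonneg hnn hsum).symm
    _ = ENNReal.ofReal (p ^ k) := by
        congr 1
        rw [hsummand, tsum_mul_left, tsum_geometric_of_lt_one hp0.le hp1]
        have hne : (1:ℝ) - p ≠ 0 := by linarith
        field_simp

lemma SKP (hRMeas : ∀ u, Measurable (R u))
    (hRDist : ∀ u k, P {ω | R u ω = k} = ENNReal.ofReal ((1 - p) * p ^ k))
    (hp0 : 0 < p) (hp1 : p < 1) (u : TdVertex d) (K k : ℕ) :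
    P (R u ⁻¹' SKset K k) = ENNReal.ofReal (Pk p K k) := by
  by_cases h : k < K
  · have : R u ⁻¹' SKset K k = {ω | R u ω = k} := by
      unfold SKset; rw [if_pos h]; ext ω; simp
    rw [this, hRDist u k, Pk, if_pos h]
  · have : R u ⁻¹' SKset K k = {ω | k ≤ R u ω} := by
      unfold SKset; rw [if_neg h]; ext ω; simp
    rw [this, tailP P R hRMeas hRDist hp0 hp1 u k, Pk, if_neg h]

end Prob

variable {K n : ℕ}

lemma vtx_inj (w : Fin n → Bk d K) {i j : ℕ} (hi : i ≤ n) (hj : j ≤ n)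
    (h : vtx w i = vtx w j) : i = j := by
  rcases Nat.lt_trichotomy i j with hlt | he | hlt
  · exact absurd (congrArg List.length h) (by have := length_vtx_lt w hlt hj; omega)
  · exact he
  · exact absurd (congrArg List.length h) (by have := length_vtx_lt w hlt hi; omega)

def blen (b : Bk d K) : ℕ := b.1.1 + 1

lemma one_le_blen (b : Bk d K) : 1 ≤ blen b := Nat.succ_le_succ (Nat.zero_le _)

lemma blen_le_K (b : Bk d K) : blen b ≤ K := Nat.succ_le_of_lt b.1.2

open scoped Classical in
def cfn (w : Fin n → Bk d K) (u : TdVertex d) : Set ℕ :=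
  Option.elim u (Set.Ici 1) fun al =>
    if h : ∃ i : Fin n, vtx w i.1 = al.2 then SKset K (blen (w h.choose)) else Set.univ

lemma cfn_none (w : Fin n → Bk d K) : cfn w none = Set.Ici 1 := rfl

lemma cfn_wrd (w : Fin n → Bk d K) (i : Fin n) :
    cfn w (wrd (vtx w i.1)) = SKset K (blen (w i)) := by
  have h : ∃ i' : Fin n, vtx w i'.1 = vtx w i.1 := ⟨i, rfl⟩
  show (if h : ∃ i' : Fin n, vtx w i'.1 = vtx w i.1
      then SKset K (blen (w h.choose)) else Set.univ) = SKset K (blen (w i))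
  rw [dif_pos h]
  have hh : h.choose = i :=
    Fin.ext (vtx_inj w h.choose.2.le i.2.le h.choose_spec)
  rw [hh]

def Fw (w : Fin n → Bk d K) : Finset (TdVertex d) :=
  insert none (Finset.image (fun i : Fin n => wrd (vtx w i.1)) Finset.univ)

def Ftl (w : Fin n → Bk d K) (j : Fin n) : Finset (TdVertex d) :=
  Finset.image (fun i : Fin n => wrd (vtx w i.1)) (Finset.univ.filter fun i => j < i)

def PbE (p : ℝ) (b : Bk d K) : ℝ≥0∞ := ENNReal.ofReal (Pk p K (blen b))

lemma wrdvtx_inj (w : Fin n → Bk d K) :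
    Function.Injective (fun i : Fin n => wrd (vtx w i.1)) := fun i j h =>
  Fin.ext (vtx_inj w i.2.le j.2.le (wrd_injective h))

section Ev

variable {Ω : Type*} [MeasurableSpace Ω] (P : Measure Ω) [IsProbabilityMeasure P]
  (R : TdVertex d → Ω → ℕ) {p : ℝ}

def Ev (R : TdVertex d → Ω → ℕ) (w : Fin n → Bk d K) : Set Ω :=
  ⋂ u ∈ Fw w, R u ⁻¹' cfn w u

lemma mem_Ev {R : TdVertex d → Ω → ℕ} {w : Fin n → Bk d K} {ω : Ω} :
    ω ∈ Ev R w ↔ 1 ≤ R none ω ∧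
      ∀ i : Fin n, R (wrd (vtx w i.1)) ω ∈ SKset K (blen (w i)) := by
  unfold Ev Fw
  simp only [Set.mem_iInter, Finset.mem_insert, Finset.mem_image, Finset.mem_univ, true_and]
  constructor
  · intro h
    refine ⟨?_, fun i => ?_⟩
    · have := h none (Or.inl rfl)
      simpa [cfn] using this
    · have := h (wrd (vtx w i.1)) (Or.inr ⟨i, rfl⟩)
      rwa [Set.mem_preimage, cfn_wrd] at this
  · rintro ⟨h0, h1⟩ u hu
    rcases hu with rfl | ⟨i, hi⟩
    · simpa [cfn] using h0
    · rw [← hi, Set.mem_preimage, cfn_wrd]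
      exact h1 i

lemma prod_Fw (hRMeas : ∀ u, Measurable (R u))
    (hRDist : ∀ u k, P {ω | R u ω = k} = ENNReal.ofReal ((1 - p) * p ^ k))
    (hp0 : 0 < p) (hp1 : p < 1) (w : Fin n → Bk d K) :
    ∏ u ∈ Fw w, P (R u ⁻¹' cfn w u)
      = ENNReal.ofReal p * ∏ i : Fin n, PbE p (w i) := by
  unfold Fw
  rw [Finset.prod_insert (by simp [wrd])]
  congr 1
  · rw [show R none ⁻¹' cfn w none = {ω | 1 ≤ R none ω} from by ext ω; simp [cfn]]
    rw [tailP P R hRMeas hRDist hp0 hp1 none 1, pow_one]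
  · rw [Finset.prod_image fun i _ j _ h => wrdvtx_inj w h]
    exact Finset.prod_congr rfl fun i _ => by
      rw [cfn_wrd, SKP P R hRMeas hRDist hp0 hp1]; rfl

lemma Ev_prob (hRIndep : iIndepFun R P)
    (hRMeas : ∀ u, Measurable (R u))
    (hRDist : ∀ u k, P {ω | R u ω = k} = ENNReal.ofReal ((1 - p) * p ^ k))
    (hp0 : 0 < p) (hp1 : p < 1) (w : Fin n → Bk d K) :
    P (Ev R w) = ENNReal.ofReal p * ∏ i : Fin n, PbE p (w i) := by
  rw [Ev, master P R hRIndep, prod_Fw P R hRMeas hRDist hp0 hp1]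

lemma pair_le (hRIndep : iIndepFun R P)
    (hRMeas : ∀ u, Measurable (R u))
    (hRDist : ∀ u k, P {ω | R u ω = k} = ENNReal.ofReal ((1 - p) * p ^ k))
    (hp0 : 0 < p) (hp1 : p < 1) {w w' : Fin n → Bk d K} {j : Fin n}
    (hagree : ∀ i : Fin n, i.1 < j.1 → w i = w' i) (hne : w j ≠ w' j) :
    P (Ev R w ∩ Ev R w') ≤ (ENNReal.ofReal p * ∏ i : Fin n, PbE p (w i)) *
      ∏ i ∈ Finset.univ.filter (fun i => j < i), PbE p (w' i) := by
  by_cases hlen : (w j).1 = (w' j).1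
  · have hdisj : Disjoint (Fw w) (Ftl w' j) := by
      rw [Finset.disjoint_left]
      rintro u hu hu'
      rw [Ftl, Finset.mem_image] at hu'
      obtain ⟨t, ht, rfl⟩ := hu'
      rw [Finset.mem_filter] at ht
      rw [Fw, Finset.mem_insert] at hu
      rcases hu with h | h
      · exact wrd_ne_none _ h
      · rw [Finset.mem_image] at h
        obtain ⟨i, _, hi⟩ := h
        exact vtx_ne_of_branch hagree hne hlen i t ht.2 (wrd_injective hi)
    have hsub : Ev R w ∩ Ev R w' ⊆
        (⋂ u ∈ Fw w, R u ⁻¹' cfn w u) ∩ ⋂ u ∈ Ftl w' j, R u ⁻¹' cfn w' u := by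
      apply Set.inter_subset_inter (le_refl _)
      intro ω hω
      simp only [Ev, Set.mem_iInter] at hω ⊢
      intro u hu
      apply hω
      rw [Ftl, Finset.mem_image] at hu
      obtain ⟨t, _, rfl⟩ := hu
      rw [Fw, Finset.mem_insert]
      exact Or.inr (Finset.mem_image_of_mem _ (Finset.mem_univ t))
    calc P (Ev R w ∩ Ev R w') ≤
        P ((⋂ u ∈ Fw w, R u ⁻¹' cfn w u) ∩ ⋂ u ∈ Ftl w' j, R u ⁻¹' cfn w' u) :=
          measure_mono hsub
      _ = (∏ u ∈ Fw w, P (R u ⁻¹' cfn w u)) * ∏ u ∈ Ftl w' j, P (R u ⁻¹' cfn w' u) :=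
          master2 P R hRIndep _ _ hdisj _ _
      _ = (ENNReal.ofReal p * ∏ i : Fin n, PbE p (w i)) *
          ∏ i ∈ Finset.univ.filter (fun i => j < i), PbE p (w' i) := by
          rw [prod_Fw P R hRMeas hRDist hp0 hp1]
          congr 1
          rw [Ftl, Finset.prod_image fun i _ j _ h => wrdvtx_inj w' h]
          exact Finset.prod_congr rfl fun i _ => by
            rw [cfn_wrd, SKP P R hRMeas hRDist hp0 hp1]; rfl
  · have hvj : vtx w j.1 = vtx w' j.1 := vtx_congr hagree j.1 le_rfl
    have hsub : Ev R w ∩ Ev R w' ⊆ (∅ : Set Ω) := by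
      rintro ω ⟨h1, h2⟩
      rw [mem_Ev] at h1 h2
      have a1 := h1.2 j
      have a2 := h2.2 j
      rw [← hvj] at a2
      have hmem : R (wrd (vtx w j.1)) ω ∈ SKset K (blen (w j)) ∩ SKset K (blen (w' j)) :=
        ⟨a1, a2⟩
      rw [SKset_disjoint (blen_le_K (w j)) (blen_le_K (w' j))
        (fun hc => hlen (Fin.ext (by unfold blen at hc; omega)))] at hmem
      exact hmem
    calc P (Ev R w ∩ Ev R w') ≤ P (∅ : Set Ω) := measure_mono hsub
      _ = 0 := measure_empty
      _ ≤ _ := zero_le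

end Ev

section Sums

lemma sum_prod_pi {β : Type*} [Fintype β] :
    ∀ (n : ℕ) (G : Fin n → β → ℝ≥0∞),
      ∑ w : Fin n → β, ∏ i, G i (w i) = ∏ i, ∑ b, G i b := by
  intro n
  induction n with
  | zero => intro G; simp
  | succ n ih =>
    intro G
    have key : ∀ (b : β) (t : Fin n → β),
        (∏ i : Fin (n + 1), G i (Fin.cons (α := fun _ => β) b t i))
          = G 0 b * ∏ i : Fin n, G i.succ (t i) := by
      intro b t
      rw [Fin.prod_univ_succ]
      simp
    calc ∑ w : Fin (n + 1) → β, ∏ i, G i (w i)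
        = ∑ q : β × (Fin n → β), ∏ i, G i ((Fin.consEquiv fun _ => β) q i) :=
          (Equiv.sum_comp (Fin.consEquiv fun _ => β) _).symm
      _ = ∑ b : β, ∑ t : Fin n → β, ∏ i, G i (Fin.cons (α := fun _ => β) b t i) := by
          rw [Fintype.sum_prod_type]; rfl
      _ = ∑ b : β, ∑ t : Fin n → β, G 0 b * ∏ i : Fin n, G i.succ (t i) :=
          Finset.sum_congr rfl fun b _ => Finset.sum_congr rfl fun t _ => key b t
      _ = (∑ b, G 0 b) * ∑ t : Fin n → β, ∏ i : Fin n, G i.succ (t i) := by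
          rw [Finset.sum_mul_sum]
      _ = ∏ i : Fin (n + 1), ∑ b, G i b := by
          rw [Fin.prod_univ_succ, ih fun i b => G i.succ b]

variable {p : ℝ}

lemma sum_M (p : ℝ) (d K n : ℕ) :
    ∑ w : Fin n → Bk d K, ∏ i, PbE p (w i) = (∑ b : Bk d K, PbE p b) ^ n := by
  rw [sum_prod_pi n fun _ b => PbE p b]
  simp [Finset.prod_const, Finset.card_univ]

lemma sum_tail {d K n : ℕ} (p : ℝ) (w : Fin n → Bk d K) (j : Fin n) :
    ∑ w' : Fin n → Bk d K,
        (if (∀ i : Fin n, i.1 < j.1 → w' i = w i)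
          then ∏ i ∈ Finset.univ.filter (fun i => j < i), PbE p (w' i) else 0)
      = (Fintype.card (Bk d K) : ℝ≥0∞) *
          (∑ b : Bk d K, PbE p b) ^ (Finset.univ.filter fun i : Fin n => j < i).card := by
  classical
  set G : Fin n → Bk d K → ℝ≥0∞ := fun i b =>
    if i.1 < j.1 then (if b = w i then 1 else 0) else if i = j then 1 else PbE p b with hG
  have step1 : ∀ w' : Fin n → Bk d K,
      (if (∀ i : Fin n, i.1 < j.1 → w' i = w i)
        then ∏ i ∈ Finset.univ.filter (fun i => j < i), PbE p (w' i) else 0)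
      = ∏ i, G i (w' i) := by
    intro w'
    by_cases hagree : ∀ i : Fin n, i.1 < j.1 → w' i = w i
    · rw [if_pos hagree]
      rw [← Finset.prod_filter_mul_prod_filter_not Finset.univ (fun i => j < i)
        (fun i => G i (w' i))]
      have e1 : ∏ i ∈ Finset.univ.filter (fun i => j < i), G i (w' i)
          = ∏ i ∈ Finset.univ.filter (fun i => j < i), PbE p (w' i) := by
        refine Finset.prod_congr rfl fun i hi => ?_
        rw [Finset.mem_filter] at hi
        have h1 : ¬ i.1 < j.1 := by have := hi.2; rw [Fin.lt_def] at this; omega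
        have h2 : i ≠ j := by intro hij; subst hij; exact absurd hi.2 (lt_irrefl _)
        rw [hG]; simp only [if_neg h1, if_neg h2]
      have e2 : ∏ i ∈ Finset.univ.filter (fun i => ¬ j < i), G i (w' i) = 1 := by
        refine Finset.prod_eq_one fun i hi => ?_
        rw [Finset.mem_filter] at hi
        by_cases h1 : i.1 < j.1
        · rw [hG]; simp only [if_pos h1, if_pos (hagree i h1)]
        · have h2 : i = j := by
            have := hi.2; rw [Fin.lt_def] at this
            exact Fin.ext (by omega)
          rw [hG]; simp only [if_neg h1, if_pos h2]
      rw [e1, e2, mul_one]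
    · rw [if_neg hagree]
      push_neg at hagree
      obtain ⟨i, hij, hne⟩ := hagree
      refine (Finset.prod_eq_zero (Finset.mem_univ i) ?_).symm
      rw [hG]; simp only [if_pos hij, if_neg hne]
  rw [Finset.sum_congr rfl fun w' _ => step1 w', sum_prod_pi n G]
  have step3 : ∀ i : Fin n, (∑ b : Bk d K, G i b)
      = if i.1 < j.1 then 1 else if i = j then (Fintype.card (Bk d K) : ℝ≥0∞)
        else ∑ b : Bk d K, PbE p b := by
    intro i
    by_cases h1 : i.1 < j.1
    · rw [if_pos h1, hG]
      simp only [if_pos h1]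
      simp [Finset.sum_ite_eq']
    · by_cases h2 : i = j
      · rw [if_neg h1, if_pos h2, hG]
        simp only [if_neg h1, if_pos h2]
        simp [Finset.card_univ]
      · rw [if_neg h1, if_neg h2, hG]
        simp only [if_neg h1, if_neg h2]
  rw [Finset.prod_congr rfl fun i _ => step3 i]
  rw [← Finset.prod_filter_mul_prod_filter_not Finset.univ (fun i => j < i)]
  have e1 : ∏ i ∈ Finset.univ.filter (fun i => j < i),
      (if i.1 < j.1 then 1 else if i = j then (Fintype.card (Bk d K) : ℝ≥0∞)
        else ∑ b : Bk d K, PbE p b)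
      = (∑ b : Bk d K, PbE p b) ^ (Finset.univ.filter fun i : Fin n => j < i).card := by
    rw [Finset.prod_congr rfl (g := fun _ => ∑ b : Bk d K, PbE p b) fun i hi => ?_,
      Finset.prod_const]
    rw [Finset.mem_filter] at hi
    have h1 : ¬ i.1 < j.1 := by have := hi.2; rw [Fin.lt_def] at this; omega
    have h2 : i ≠ j := by intro hij; subst hij; exact absurd hi.2 (lt_irrefl _)
    rw [if_neg h1, if_neg h2]
  have e2 : ∏ i ∈ Finset.univ.filter (fun i => ¬ j < i),
      (if i.1 < j.1 then 1 else if i = j then (Fintype.card (Bk d K) : ℝ≥0∞)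
        else ∑ b : Bk d K, PbE p b)
      = (Fintype.card (Bk d K) : ℝ≥0∞) := by
    have hmem : j ∈ Finset.univ.filter (fun i : Fin n => ¬ j < i) :=
      Finset.mem_filter.mpr ⟨Finset.mem_univ _, lt_irrefl _⟩
    have h0 : ∀ i ∈ Finset.univ.filter (fun i : Fin n => ¬ j < i), i ≠ j →
        (if i.1 < j.1 then (1 : ℝ≥0∞) else if i = j then (Fintype.card (Bk d K) : ℝ≥0∞)
          else ∑ b : Bk d K, PbE p b) = 1 := by
      intro i hi hne
      rw [Finset.mem_filter] at hi
      have h1 : i.1 < j.1 := by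
        have := hi.2; rw [Fin.lt_def] at this
        have : i.1 ≠ j.1 := fun hc => hne (Fin.ext hc)
        omega
      rw [if_pos h1]
    rw [Finset.prod_eq_single_of_mem j hmem h0, if_neg (lt_irrefl _), if_pos rfl]
  rw [e1, e2]
  exact mul_comm _ _

lemma card_filter_gt_le {n : ℕ} (j : Fin n) :
    (Finset.univ.filter fun i : Fin n => j < i).card ≤ n - 1 - j.1 := by
  refine le_trans (Finset.card_le_card_of_injOn (t := Finset.range (n - 1 - j.1))
    (fun i : Fin n => i.1 - j.1 - 1) ?_ ?_) (le_of_eq (Finset.card_range _))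
  · intro i hi
    rw [Finset.mem_coe, Finset.mem_filter, Fin.lt_def] at hi
    rw [Finset.mem_coe, Finset.mem_range]
    show i.1 - j.1 - 1 < n - 1 - j.1
    have h1 := i.2
    have h2 := j.2
    omega
  · intro i hi i' hi' hee
    rw [Finset.coe_filter] at hi hi'
    simp only [Set.mem_setOf_eq, Fin.lt_def] at hi hi'
    have hee' : i.1 - j.1 - 1 = i'.1 - j.1 - 1 := hee
    exact Fin.ext (by omega)

end Sums

section SecondMoment

variable {Ω : Type*} [MeasurableSpace Ω] (P : Measure Ω) [IsProbabilityMeasure P]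
  (R : TdVertex d → Ω → ℕ) {p : ℝ}

lemma Ev_measurable (hRMeas : ∀ u, Measurable (R u)) (w : Fin n → Bk d K) :
    MeasurableSet (Ev (Ω := Ω) R w) :=
  Finset.measurableSet_biInter _ fun u _ => (hRMeas u) .of_discrete

lemma sum_single (hRIndep : iIndepFun R P)
    (hRMeas : ∀ u, Measurable (R u))
    (hRDist : ∀ u k, P {ω | R u ω = k} = ENNReal.ofReal ((1 - p) * p ^ k))
    (hp0 : 0 < p) (hp1 : p < 1) :
    ∑ w : Fin n → Bk d K, P (Ev R w)
      = ENNReal.ofReal p * (∑ b : Bk d K, PbE p b) ^ n := by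
  rw [Finset.sum_congr rfl fun w _ => Ev_prob P R hRIndep hRMeas hRDist hp0 hp1 w]
  rw [← Finset.mul_sum, sum_M]

lemma sum_pairs_le (hRIndep : iIndepFun R P)
    (hRMeas : ∀ u, Measurable (R u))
    (hRDist : ∀ u k, P {ω | R u ω = k} = ENNReal.ofReal ((1 - p) * p ^ k))
    (hp0 : 0 < p) (hp1 : p < 1) :
    ∑ q : (Fin n → Bk d K) × (Fin n → Bk d K), P (Ev R q.1 ∩ Ev R q.2)
      ≤ ENNReal.ofReal p * (∑ b : Bk d K, PbE p b) ^ n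
        + ∑ j : Fin n, ENNReal.ofReal p * (∑ b : Bk d K, PbE p b) ^ n *
            ((Fintype.card (Bk d K) : ℝ≥0∞) *
              (∑ b : Bk d K, PbE p b) ^ (Finset.univ.filter fun i : Fin n => j < i).card) := by
  classical
  set mE : ℝ≥0∞ := ∑ b : Bk d K, PbE p b with hmE
  set pE : ℝ≥0∞ := ENNReal.ofReal p with hpE
  set χ : ((Fin n → Bk d K) × (Fin n → Bk d K)) → Fin n → ℝ≥0∞ := fun q j =>
    if (∀ i : Fin n, i.1 < j.1 → q.1 i = q.2 i) ∧ q.1 j ≠ q.2 j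
      then (pE * ∏ i, PbE p (q.1 i)) * ∏ i ∈ Finset.univ.filter (fun i => j < i), PbE p (q.2 i)
      else 0 with hχ
  have stepA : ∀ q : (Fin n → Bk d K) × (Fin n → Bk d K),
      P (Ev R q.1 ∩ Ev R q.2)
        ≤ (if q.1 = q.2 then P (Ev R q.1) else 0) + ∑ j : Fin n, χ q j := by
    rintro ⟨w, w'⟩
    by_cases h : w = w'
    · subst h
      simp only [if_pos rfl, Set.inter_self]
      exact le_self_add
    · have hS : (Finset.univ.filter fun i : Fin n => w i ≠ w' i).Nonempty := by
        rw [Finset.filter_nonempty_iff]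
        by_contra hc
        push_neg at hc
        exact h (funext fun i => hc i (Finset.mem_univ i))
      set j₀ := (Finset.univ.filter fun i : Fin n => w i ≠ w' i).min' hS with hj₀
      have hne : w j₀ ≠ w' j₀ := by
        have := Finset.min'_mem _ hS
        rw [Finset.mem_filter] at this
        exact this.2
      have hagree : ∀ i : Fin n, i.1 < j₀.1 → w i = w' i := by
        intro i hi
        by_contra hc
        have hmem : i ∈ Finset.univ.filter fun i : Fin n => w i ≠ w' i :=
          Finset.mem_filter.mpr ⟨Finset.mem_univ _, hc⟩
        have := Finset.min'_le _ i hmem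
        rw [Fin.le_def] at this
        omega
      have h1 : P (Ev R w ∩ Ev R w') ≤ χ (w, w') j₀ := by
        rw [hχ]
        simp only [if_pos (And.intro hagree hne)]
        exact pair_le P R hRIndep hRMeas hRDist hp0 hp1 hagree hne
      have h2 : χ (w, w') j₀ ≤ ∑ j : Fin n, χ (w, w') j :=
        Finset.single_le_sum (fun j _ => zero_le) (Finset.mem_univ j₀)
      rw [if_neg h, zero_add]
      exact h1.trans h2
  calc ∑ q : (Fin n → Bk d K) × (Fin n → Bk d K), P (Ev R q.1 ∩ Ev R q.2)
      ≤ ∑ q : (Fin n → Bk d K) × (Fin n → Bk d K),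
          ((if q.1 = q.2 then P (Ev R q.1) else 0) + ∑ j : Fin n, χ q j) :=
        Finset.sum_le_sum fun q _ => stepA q
    _ = (∑ q : (Fin n → Bk d K) × (Fin n → Bk d K), (if q.1 = q.2 then P (Ev R q.1) else 0))
        + ∑ q : (Fin n → Bk d K) × (Fin n → Bk d K), ∑ j : Fin n, χ q j := by
        rw [Finset.sum_add_distrib]
    _ ≤ pE * mE ^ n + ∑ j : Fin n, pE * mE ^ n *
          ((Fintype.card (Bk d K) : ℝ≥0∞) *
            mE ^ (Finset.univ.filter fun i : Fin n => j < i).card) := by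
        gcongr ?_ + ?_
        · -- diagonal
          rw [Fintype.sum_prod_type]
          have : ∀ w : Fin n → Bk d K,
              (∑ w' : Fin n → Bk d K, if w = w' then P (Ev R w) else 0) = P (Ev R w) := by
            intro w
            rw [Finset.sum_ite_eq Finset.univ w fun _ => P (Ev R w)]
            simp
          rw [Finset.sum_congr rfl fun w _ => this w,
            sum_single P R hRIndep hRMeas hRDist hp0 hp1]
        · -- off-diagonal
          rw [Finset.sum_comm]
          refine Finset.sum_le_sum fun j _ => ?_
          have hle : ∀ q : (Fin n → Bk d K) × (Fin n → Bk d K), χ q j ≤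
              (pE * ∏ i, PbE p (q.1 i)) *
                (if (∀ i : Fin n, i.1 < j.1 → q.2 i = q.1 i)
                  then ∏ i ∈ Finset.univ.filter (fun i => j < i), PbE p (q.2 i) else 0) := by
            intro q
            simp only [hχ]
            by_cases hc : (∀ i : Fin n, i.1 < j.1 → q.1 i = q.2 i) ∧ q.1 j ≠ q.2 j
            · rw [if_pos hc, if_pos fun i hi => (hc.1 i hi).symm]
            · rw [if_neg hc]
              exact zero_le
          refine le_trans (Finset.sum_le_sum fun q _ => hle q) ?_
          rw [Fintype.sum_prod_type]
          have inner : ∀ w : Fin n → Bk d K,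
              (∑ w' : Fin n → Bk d K, (pE * ∏ i, PbE p (w i)) *
                (if (∀ i : Fin n, i.1 < j.1 → w' i = w i)
                  then ∏ i ∈ Finset.univ.filter (fun i => j < i), PbE p (w' i) else 0))
              = (pE * ∏ i, PbE p (w i)) * ((Fintype.card (Bk d K) : ℝ≥0∞) *
                  mE ^ (Finset.univ.filter fun i : Fin n => j < i).card) := by
            intro w
            rw [← Finset.mul_sum, sum_tail p w j]
          rw [Finset.sum_congr rfl fun w _ => inner w, ← Finset.sum_mul, ← Finset.mul_sum,
            sum_M]
  
end SecondMoment

section CE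

variable {Ω : Type*} [MeasurableSpace Ω] (P : Measure Ω) [IsProbabilityMeasure P]

lemma chung_erdos {ι : Type*} [Fintype ι] (E : ι → Set Ω) (hE : ∀ i, MeasurableSet (E i)) :
    (∑ i, P (E i)) ^ 2 ≤ (∑ q : ι × ι, P (E q.1 ∩ E q.2)) * P (⋃ i, E i) := by
  classical
  set f : Ω → ℝ≥0∞ := fun ω => ∑ i, (E i).indicator (1 : Ω → ℝ≥0∞) ω with hf
  set g : Ω → ℝ≥0∞ := (⋃ i, E i).indicator (1 : Ω → ℝ≥0∞) with hg
  have hfm : Measurable f := Finset.measurable_sum _ fun i _ =>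
    measurable_one.indicator (hE i)
  have hgm : Measurable g := measurable_one.indicator (MeasurableSet.iUnion fun i => hE i)
  have hfg : f = f * g := by
    funext ω
    by_cases hω : ω ∈ ⋃ i, E i
    · rw [Pi.mul_apply, hg, Set.indicator_of_mem hω, Pi.one_apply, mul_one]
    · have : f ω = 0 := by
        rw [hf]
        refine Finset.sum_eq_zero fun i _ => ?_
        have : ω ∉ E i := fun hc => hω (Set.mem_iUnion.mpr ⟨i, hc⟩)
        exact Set.indicator_of_notMem this _
      rw [Pi.mul_apply, this, zero_mul]
  have h1 : ∫⁻ ω, f ω ∂P = ∑ i, P (E i) := by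
    rw [hf]
    show ∫⁻ ω, ∑ i, (E i).indicator (1 : Ω → ℝ≥0∞) ω ∂P = _
    rw [lintegral_finset_sum _ fun i _ => measurable_one.indicator (hE i)]
    exact Finset.sum_congr rfl fun i _ => lintegral_indicator_one (hE i)
  have hg2 : ∀ ω, g ω ^ (2:ℝ) = g ω := by
    intro ω
    rw [hg]
    by_cases hω : ω ∈ ⋃ i, E i
    · rw [Set.indicator_of_mem hω, Pi.one_apply, ENNReal.one_rpow]
    · rw [Set.indicator_of_notMem hω, ENNReal.zero_rpow_of_pos (by norm_num)]
  have h2 : ∫⁻ ω, g ω ^ (2:ℝ) ∂P = P (⋃ i, E i) := by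
    calc ∫⁻ ω, g ω ^ (2:ℝ) ∂P = ∫⁻ ω, g ω ∂P := by
          congr 1; funext ω; exact hg2 ω
      _ = P (⋃ i, E i) := lintegral_indicator_one (MeasurableSet.iUnion fun i => hE i)
  have hff : ∀ ω, f ω ^ (2:ℝ) = ∑ q : ι × ι, (E q.1 ∩ E q.2).indicator (1 : Ω → ℝ≥0∞) ω := by
    intro ω
    rw [show ((2:ℝ)) = ((2:ℕ):ℝ) by norm_num, ENNReal.rpow_natCast, sq, hf,
      Finset.sum_mul_sum, ← Fintype.sum_prod_type']
    refine Finset.sum_congr rfl fun q _ => ?_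
    rw [Set.inter_indicator_one]
    rfl
  have h3 : ∫⁻ ω, f ω ^ (2:ℝ) ∂P = ∑ q : ι × ι, P (E q.1 ∩ E q.2) := by
    calc ∫⁻ ω, f ω ^ (2:ℝ) ∂P
        = ∫⁻ ω, ∑ q : ι × ι, (E q.1 ∩ E q.2).indicator (1 : Ω → ℝ≥0∞) ω ∂P := by
          congr 1; funext ω; exact hff ω
      _ = ∑ q : ι × ι, P (E q.1 ∩ E q.2) := by
          rw [lintegral_finset_sum _ fun q _ =>
            measurable_one.indicator ((hE q.1).inter (hE q.2))]
          exact Finset.sum_congr rfl fun q _ =>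
            lintegral_indicator_one ((hE q.1).inter (hE q.2))
  have hpq : Real.HolderConjugate 2 2 := Real.HolderConjugate.two_two
  have hholder := ENNReal.lintegral_mul_le_Lp_mul_Lq P hpq hfm.aemeasurable hgm.aemeasurable
  rw [← hfg] at hholder
  rw [h1, h2, h3] at hholder
  have hsq := pow_le_pow_left₀ zero_le hholder 2
  rw [mul_pow] at hsq
  have hx : ∀ x : ℝ≥0∞, (x ^ ((1:ℝ)/2)) ^ (2:ℕ) = x := by
    intro x
    rw [← ENNReal.rpow_natCast (x ^ ((1:ℝ)/2)) 2, ← ENNReal.rpow_mul]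
    norm_num
  rw [hx, hx] at hsq
  exact hsq

end CE

section Reach

variable {Ω : Type*} [MeasurableSpace Ω] (R : TdVertex d → Ω → ℕ)

lemma reachSet_succ (dist : TdVertex d → TdVertex d → ℕ) (o : TdVertex d) (r : TdVertex d → ℕ)
    (m : ℕ) :
    reachSet dist o r (m + 1) = ⋃ u ∈ reachSet dist o r m, {w | dist u w ≤ r u} := rfl

lemma measurable_mem_reach (hRMeas : ∀ u, Measurable (R u)) (m : ℕ) :
    ∀ v : TdVertex d,
      MeasurableSet {ω | v ∈ reachSet distFull none (fun u => R u ω) m} := by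
  induction m with
  | zero =>
    intro v
    by_cases h : v = (none : TdVertex d)
    · have : {ω : Ω | v ∈ reachSet distFull none (fun u => R u ω) 0} = Set.univ := by
        ext ω; simp [reachSet, h]
      rw [this]; exact MeasurableSet.univ
    · have : {ω : Ω | v ∈ reachSet distFull none (fun u => R u ω) 0} = ∅ := by
        ext ω; simp [reachSet, h]
      rw [this]; exact MeasurableSet.empty
  | succ m ih =>
    intro v
    have heq : {ω : Ω | v ∈ reachSet distFull none (fun u => R u ω) (m + 1)}
        = ⋃ u : TdVertex d, ({ω : Ω | u ∈ reachSet distFull none (fun u' => R u' ω) m}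
            ∩ {ω : Ω | distFull u v ≤ R u ω}) := by
      ext ω
      simp only [Set.mem_setOf_eq, reachSet_succ, Set.mem_iUnion, Set.mem_inter_iff]
      constructor
      · rintro ⟨u, hu, hv⟩
        exact ⟨u, hu, hv⟩
      · rintro ⟨u, hu, hv⟩
        exact ⟨u, hu, hv⟩
    rw [heq]
    exact MeasurableSet.iUnion fun u =>
      (ih u).inter ((hRMeas u) .of_discrete)

def Dn (R : TdVertex d → Ω → ℕ) (n : ℕ) : Set Ω :=
  ⋃ (v : TdVertex d) (_ : n ≤ distFull none v) (m : ℕ),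
    {ω | v ∈ reachSet distFull none (fun u => R u ω) m}

lemma Dn_measurable (hRMeas : ∀ u, Measurable (R u)) (n : ℕ) :
    MeasurableSet (Dn R n) :=
  MeasurableSet.iUnion fun v => MeasurableSet.iUnion fun _ =>
    MeasurableSet.iUnion fun m => measurable_mem_reach R hRMeas m v

lemma Dn_antitone : Antitone (Dn R) := by
  apply antitone_nat_of_succ_le
  intro n ω hω
  simp only [Dn, Set.mem_iUnion] at hω ⊢
  obtain ⟨v, hv, m, hm⟩ := hω
  exact ⟨v, by omega, m, hm⟩

lemma iInter_Dn_subset_survival :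
    (⋂ n, Dn R n) ⊆ survival distFull (none : TdVertex d) R := by
  intro ω hω
  rw [Set.mem_iInter] at hω
  show (cluster distFull none fun u => R u ω).Infinite
  by_contra hfin
  rw [Set.not_infinite] at hfin
  have himg : ((fun v => distFull (none : TdVertex d) v) ''
      (cluster distFull none fun u => R u ω)).Finite := hfin.image _
  obtain ⟨N, hN⟩ := himg.bddAbove
  have h := hω (N + 1)
  simp only [Dn, Set.mem_iUnion] at h
  obtain ⟨v, hv, m, hm⟩ := h
  have hvc : v ∈ cluster distFull none fun u => R u ω := Set.mem_iUnion.mpr ⟨m, hm⟩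
  have : distFull (none : TdVertex d) v ≤ N := hN (Set.mem_image_of_mem _ hvc)
  omega

lemma Ev_subset_Dn (w : Fin n → Bk d K) : Ev (K := K) R w ⊆ Dn R n := by
  intro ω hω
  rw [mem_Ev] at hω
  obtain ⟨h0, h1⟩ := hω
  have chain : ∀ i : ℕ, i ≤ n →
      wrd (vtx w i) ∈ reachSet distFull none (fun u => R u ω) (i + 1) := by
    intro i
    induction i with
    | zero =>
      intro _
      rw [reachSet_succ]
      refine Set.mem_biUnion rfl ?_
      show distFull (none : TdVertex d) (wrd (vtx w 0)) ≤ R none ω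
      have : vtx w 0 = [] := rfl
      rw [this, distFull_none_wrd]
      simpa using h0
    | succ i ih =>
      intro hsucc
      have hi : i < n := by omega
      have hu := ih (by omega)
      rw [reachSet_succ]
      refine Set.mem_biUnion hu ?_
      show distFull (wrd (vtx w i)) (wrd (vtx w (i + 1))) ≤ R (wrd (vtx w i)) ω
      rw [vtx_succ w hi, distFull_wrd, length_toW]
      have := SKset_subset_Ici K (blen (w ⟨i, hi⟩)) (h1 ⟨i, hi⟩)
      rw [Set.mem_Ici] at this
      exact this
  refine Set.mem_iUnion.mpr ⟨wrd (vtx w n), Set.mem_iUnion.mpr ⟨?_, Set.mem_iUnion.mpr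
    ⟨n + 1, chain n le_rfl⟩⟩⟩
  rw [distFull_none_wrd]
  have := le_length_vtx w n le_rfl
  omega

end Reach

section Arith

lemma mE_eq (d K : ℕ) {p : ℝ} (hp0 : 0 < p) (hp1 : p < 1) :
    (∑ b : Bk d K, PbE p b)
      = ENNReal.ofReal (∑ k ∈ Finset.range K, (d:ℝ) ^ (k+1) * Pk p K (k+1)) := by
  classical
  have h1 : (∑ b : Bk d K, PbE p b)
      = ∑ k : Fin K, (Fintype.card (Fin (k.1+1) → Fin d)) •
          ENNReal.ofReal (Pk p K (k.1+1)) := by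
    rw [← Finset.univ_sigma_univ, Finset.sum_sigma]
    refine Finset.sum_congr rfl fun k _ => ?_
    calc ∑ s : Fin (k.1+1) → Fin d, PbE p ⟨k, s⟩
        = ∑ _s : Fin (k.1+1) → Fin d, ENNReal.ofReal (Pk p K (k.1+1)) := rfl
      _ = (Fintype.card (Fin (k.1+1) → Fin d)) • ENNReal.ofReal (Pk p K (k.1+1)) := by
          rw [Finset.sum_const, Finset.card_univ]
  rw [h1]
  have h2 : ∀ k : Fin K, (Fintype.card (Fin (k.1+1) → Fin d)) •
      ENNReal.ofReal (Pk p K (k.1+1))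
      = ENNReal.ofReal ((d:ℝ) ^ (k.1+1) * Pk p K (k.1+1)) := by
    intro k
    rw [Fintype.card_fun, Fintype.card_fin, Fintype.card_fin, nsmul_eq_mul]
    rw [ENNReal.ofReal_mul (by positivity)]
    congr 1
    rw [← ENNReal.ofReal_natCast]
    congr 1
    push_cast
    ring
  rw [Finset.sum_congr rfl fun k _ => h2 k]
  rw [ENNReal.ofReal_sum_of_nonneg
    (fun k _ => mul_nonneg (by positivity) (Pk_nonneg hp0 hp1 _ _))]
  exact Fin.sum_univ_eq_sum_range (fun k => ENNReal.ofReal ((d:ℝ) ^ (k+1) * Pk p K (k+1))) K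

lemma exists_K (d : ℕ) (hd : 2 ≤ d) {p : ℝ} (hp0 : 0 < p) (hp1 : p < 1)
    (hcrit : (d : ℝ) * p ^ 2 - 2 * (d : ℝ) * p + 1 < 0) :
    ∃ K : ℕ, 1 < ∑ k ∈ Finset.range K, (d:ℝ) ^ (k+1) * Pk p K (k+1) := by
  have hd0 : (0:ℝ) < d := by positivity
  have hkey : (1 - p) * ((d:ℝ) * p) > 1 - (d:ℝ) * p := by nlinarith
  by_cases hdp : 1 ≤ (d:ℝ) * p
  · refine ⟨2, ?_⟩
    rw [Finset.sum_range_succ, Finset.sum_range_succ, Finset.sum_range_zero]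
    have e1 : Pk p 2 1 = (1 - p) * p := by
      unfold Pk; rw [if_pos (by norm_num)]; ring
    have e2 : Pk p 2 2 = p ^ 2 := by
      unfold Pk; rw [if_neg (by norm_num)]
    rw [e1, e2]
    have hpos : 0 < (d:ℝ) * ((1 - p) * p) :=
      mul_pos hd0 (mul_pos (by linarith) hp0)
    have h2 : (1:ℝ) ≤ ((d:ℝ) * p) ^ 2 := one_le_pow₀ hdp
    have he : (0:ℝ) + (d:ℝ)^(0+1)*((1-p)*p) + (d:ℝ)^(1+1)*p^2
        = (d:ℝ)*((1-p)*p) + ((d:ℝ)*p)^2 := by ring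
    rw [he]
    linarith
  · push_neg at hdp
    have hdp0 : (0:ℝ) < (d:ℝ) * p := by positivity
    have hsub : (0:ℝ) < 1 - (d:ℝ)*p := by linarith
    have hlim : 1 < (1 - p) * ((d:ℝ)*p) * (1 - (d:ℝ)*p)⁻¹ := by
      rw [← div_eq_mul_inv, lt_div_iff₀ hsub]
      linarith
    have hgeo : HasSum (fun k : ℕ => (1 - p) * ((d:ℝ)*p) * ((d:ℝ)*p)^k)
        ((1 - p) * ((d:ℝ)*p) * (1 - (d:ℝ)*p)⁻¹) :=
      (hasSum_geometric_of_lt_one (by positivity) hdp).mul_left _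
    have htend := hgeo.tendsto_sum_nat
    have hev : ∀ᶠ N in Filter.atTop,
        1 < ∑ k ∈ Finset.range N, (1 - p) * ((d:ℝ)*p) * ((d:ℝ)*p)^k :=
      htend.eventually (eventually_gt_nhds hlim)
    obtain ⟨N, hN⟩ := hev.exists
    refine ⟨N + 1, ?_⟩
    rw [Finset.sum_range_succ]
    have hterm : ∀ k ∈ Finset.range N, (d:ℝ)^(k+1) * Pk p (N+1) (k+1)
        = (1 - p) * ((d:ℝ)*p) * ((d:ℝ)*p)^k := by
      intro k hk
      rw [Finset.mem_range] at hk
      unfold Pk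
      rw [if_pos (by omega)]
      rw [mul_pow]
      ring
    rw [Finset.sum_congr rfl hterm]
    have hlast : 0 ≤ (d:ℝ)^(N+1) * Pk p (N+1) (N+1) :=
      mul_nonneg (by positivity) (Pk_nonneg hp0 hp1 _ _)
    linarith

end Arith

end ConePerc

open ConePerc

/-- Cone percolation on `T_d` with geometric radius of influence,
`P[R = k] = (1 - p) p^k` for `k = 0, 1, 2, …`, `0 < p < 1`.
If `d p² - 2 d p + 1 < 0` then `P[V] > 0`. -/
theorem conePercolation_geometric_survives
    (d : ℕ) (hd : 2 ≤ d) (p : ℝ) (hp0 : 0 < p) (hp1 : p < 1)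
    (Ω : Type*) [MeasurableSpace Ω] (P : Measure Ω) [IsProbabilityMeasure P]
    (R : TdVertex d → Ω → ℕ) (hRMeas : ∀ u, Measurable (R u))
    (hRIndep : iIndepFun R P)
    (hRDist : ∀ u k, P {ω | R u ω = k} = ENNReal.ofReal ((1 - p) * p ^ k))
    (hcrit : (d : ℝ) * p ^ 2 - 2 * (d : ℝ) * p + 1 < 0) :
    0 < P (survival distFull (none : TdVertex d) R) := by
  classical
  obtain ⟨K, hm⟩ := exists_K d hd hp0 hp1 hcrit
  set mE : ℝ≥0∞ := ∑ b : Bk d K, PbE p b with hmEdef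
  have hmE_eq : mE = ENNReal.ofReal
      (∑ k ∈ Finset.range K, (d:ℝ) ^ (k+1) * Pk p K (k+1)) := mE_eq d K hp0 hp1
  have hmE1 : 1 < mE := by
    rw [hmE_eq, ← ENNReal.ofReal_one]
    exact (ENNReal.ofReal_lt_ofReal_iff (by linarith)).mpr hm
  have hmE0 : mE ≠ 0 := fun h => by simp [h] at hmE1
  have hmEtop : mE ≠ ⊤ := by rw [hmE_eq]; exact ENNReal.ofReal_ne_top
  set pE : ℝ≥0∞ := ENNReal.ofReal p with hpEdef
  have hpE0 : pE ≠ 0 := (ENNReal.ofReal_pos.mpr hp0).ne'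
  have hpEtop : pE ≠ ⊤ := ENNReal.ofReal_ne_top
  set κ : ℝ≥0∞ := (Fintype.card (Bk d K) : ℝ≥0∞) with hκdef
  have hκtop : κ ≠ ⊤ := ENNReal.natCast_ne_top _
  have hr1 : mE⁻¹ < 1 := ENNReal.inv_lt_one.mpr hmE1
  have hsub0 : (1 : ℝ≥0∞) - mE⁻¹ ≠ 0 := (tsub_pos_of_lt hr1).ne'
  set X : ℝ≥0∞ := (1 - mE⁻¹)⁻¹ with hXdef
  have hXtop : X ≠ ⊤ := ENNReal.inv_ne_top.mpr hsub0
  set CC : ℝ≥0∞ := 1 + κ * X with hCCdef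
  have hCCtop : CC ≠ ⊤ :=
    ENNReal.add_ne_top.mpr ⟨ENNReal.one_ne_top, ENNReal.mul_ne_top hκtop hXtop⟩
  have hCC0 : CC ≠ 0 := (lt_of_lt_of_le zero_lt_one le_self_add).ne'
  have key : ∀ m : ℕ, pE / CC ≤ P (Dn R m) := by
    intro m
    have hCE := chung_erdos P (fun w : Fin m → Bk d K => Ev R w)
      (fun w => Ev_measurable R hRMeas w)
    rw [sum_single P R hRIndep hRMeas hRDist hp0 hp1] at hCE
    have hTT := sum_pairs_le (K := K) (n := m) P R hRIndep hRMeas hRDist hp0 hp1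
    -- bound the tail sum
    have hgeom : ∀ j : Fin m,
        mE ^ (Finset.univ.filter fun i : Fin m => j < i).card
          ≤ mE ^ (m - 1) * (mE⁻¹) ^ (j : ℕ) := by
      intro j
      have h1 : mE ^ (Finset.univ.filter fun i : Fin m => j < i).card
          ≤ mE ^ (m - 1 - (j:ℕ)) := pow_le_pow_right₀ hmE1.le (card_filter_gt_le j)
      refine h1.trans ?_
      have hdiv : mE ^ (m - 1) * (mE⁻¹) ^ (j:ℕ) = mE ^ (m - 1) / mE ^ (j:ℕ) := by
        rw [← ENNReal.inv_pow, div_eq_mul_inv]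
      rw [hdiv]
      rw [ENNReal.le_div_iff_mul_le (Or.inl (pow_ne_zero _ hmE0))
        (Or.inl (ENNReal.pow_ne_top hmEtop))]
      rw [← pow_add]
      exact pow_le_pow_right₀ hmE1.le (by omega)
    have hsumgeom : ∑ j : Fin m, (mE⁻¹) ^ (j:ℕ) ≤ X := by
      rw [Fin.sum_univ_eq_sum_range (fun j => (mE⁻¹) ^ j) m]
      refine le_trans (ENNReal.sum_le_tsum _) ?_
      rw [ENNReal.tsum_geometric]
    have hTT2 : pE * mE ^ m
        + ∑ j : Fin m, pE * mE ^ m * (κ * mE ^ (Finset.univ.filter fun i : Fin m => j < i).card)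
        ≤ pE * mE ^ (2 * m) * CC := by
      have hA : pE * mE ^ m ≤ pE * mE ^ (2 * m) :=
        mul_le_mul_right (pow_le_pow_right₀ hmE1.le (by omega)) _
      have hB : ∑ j : Fin m, pE * mE ^ m *
            (κ * mE ^ (Finset.univ.filter fun i : Fin m => j < i).card)
          ≤ pE * mE ^ (2 * m) * (κ * X) := by
        calc ∑ j : Fin m, pE * mE ^ m *
              (κ * mE ^ (Finset.univ.filter fun i : Fin m => j < i).card)
            ≤ ∑ j : Fin m, pE * mE ^ m * (κ * (mE ^ (m-1) * (mE⁻¹) ^ (j:ℕ))) := by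
              refine Finset.sum_le_sum fun j _ => ?_
              exact mul_le_mul_right (mul_le_mul_right (hgeom j) _) _
          _ = pE * mE ^ m * (κ * (mE ^ (m-1) * ∑ j : Fin m, (mE⁻¹) ^ (j:ℕ))) := by
              rw [← Finset.mul_sum, ← Finset.mul_sum, ← Finset.mul_sum]
          _ ≤ pE * mE ^ m * (κ * (mE ^ (m-1) * X)) :=
              mul_le_mul_right (mul_le_mul_right (mul_le_mul_right hsumgeom _) _) _
          _ = pE * (mE ^ m * mE ^ (m-1)) * (κ * X) := by ring
          _ ≤ pE * mE ^ (2 * m) * (κ * X) := by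
              rw [← pow_add]
              exact mul_le_mul_left (mul_le_mul_right
                (pow_le_pow_right₀ hmE1.le (by omega)) _) _
      calc pE * mE ^ m + ∑ j : Fin m, pE * mE ^ m *
            (κ * mE ^ (Finset.univ.filter fun i : Fin m => j < i).card)
          ≤ pE * mE ^ (2 * m) + pE * mE ^ (2 * m) * (κ * X) := add_le_add hA hB
        _ = pE * mE ^ (2 * m) * CC := by rw [hCCdef]; ring
    set U : Set Ω := ⋃ w : Fin m → Bk d K, Ev R w with hUdef
    have h1 : (pE * mE ^ m) ^ 2 ≤ pE * mE ^ (2 * m) * CC * P U :=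
      le_trans hCE (mul_le_mul_left (hTT.trans hTT2) _)
    have h2 : pE ≤ P U * CC := by
      have hX0 : pE * mE ^ (2 * m) ≠ 0 := mul_ne_zero hpE0 (pow_ne_zero _ hmE0)
      have hXt : pE * mE ^ (2 * m) ≠ ⊤ :=
        ENNReal.mul_ne_top hpEtop (ENNReal.pow_ne_top hmEtop)
      have hmul : (pE * mE ^ (2 * m)) * pE ≤ (pE * mE ^ (2 * m)) * (P U * CC) := by
        calc (pE * mE ^ (2 * m)) * pE = (pE * mE ^ m) ^ 2 := by
              rw [pow_two, two_mul, pow_add]; ring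
          _ ≤ pE * mE ^ (2 * m) * CC * P U := h1
          _ = (pE * mE ^ (2 * m)) * (P U * CC) := by ring
      exact (ENNReal.mul_le_mul_iff_right hX0 hXt).mp hmul
    have h3 : pE / CC ≤ P U := ENNReal.div_le_of_le_mul h2
    exact h3.trans (measure_mono (Set.iUnion_subset fun w => Ev_subset_Dn R w))
  have hlim := tendsto_measure_iInter_atTop (μ := P)
    (fun i => (Dn_measurable R hRMeas i).nullMeasurableSet) (Dn_antitone R)
    ⟨0, measure_ne_top P _⟩
  have hfinal : pE / CC ≤ P (⋂ i, Dn R i) :=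
    ge_of_tendsto hlim (Filter.Eventually.of_forall key)
  have hpos : (0 : ℝ≥0∞) < pE / CC := ENNReal.div_pos hpE0 hCCtop
  calc (0 : ℝ≥0∞) < pE / CC := hpos
    _ ≤ P (⋂ i, Dn R i) := hfinal
    _ ≤ P (survival distFull (none : TdVertex d) R) :=
        measure_mono (iInter_Dn_subset_survival R)
end
end

section
/- Consider the cone percolation process on T_d with binomial radius of influence, R ~ Binomial(n, p), i.e. P[R = k] = C(n,k) p^k (1 − p)^{n−k} for k = 0,1,...,n, where 0 < p < 1 and n ≥ 1. If (pd + 1 − p)^n − (1 − p)^n > 1, then P[V] > 0. -/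
open MeasureTheory ProbabilityTheory Filter Set
open scoped ENNReal

set_option linter.unusedSectionVars false
set_option linter.unusedVariables false

noncomputable section

namespace CPaux


/-- offspring count: `d^k` if `k ≥ 1`, else `0`. -/
def phi (d k : ℕ) : ℕ := if k = 0 then 0 else d ^ k

variable {d : ℕ}

abbrev W (d : ℕ) := List (Fin d)

def nextGen (r : W d → ℕ) (T : Finset (W d)) : Finset (W d) :=
  T.biUnion fun w => if r w = 0 then ∅ else
    (Finset.univ : Finset (Fin (r w) → Fin d)).image fun f => w ++ List.ofFn f

def gen (r : W d → ℕ) : ℕ → Finset (W d)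
  | 0 => {[]}
  | m + 1 => nextGen r (gen r m)

lemma mem_nextGen {r : W d → ℕ} {T : Finset (W d)} {v : W d} :
    v ∈ nextGen r T ↔ ∃ w ∈ T, r w ≠ 0 ∧ ∃ s : W d, s.length = r w ∧ v = w ++ s := by
  simp only [nextGen, Finset.mem_biUnion]
  constructor
  · rintro ⟨w, hw, hv⟩
    by_cases h : r w = 0
    · simp [h] at hv
    · simp only [h, if_false, Finset.mem_image, Finset.mem_univ, true_and] at hv
      obtain ⟨f, hf⟩ := hv
      exact ⟨w, hw, h, List.ofFn f, by simp, hf.symm⟩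
  · rintro ⟨w, hw, h, s, hs, rfl⟩
    refine ⟨w, hw, ?_⟩
    simp only [h, if_false, Finset.mem_image, Finset.mem_univ, true_and]
    refine ⟨fun i => s.get (Fin.cast hs.symm i), ?_⟩
    congr 1
    apply List.ext_get (by simp [hs])
    intro i h1 h2
    simp [List.get_ofFn]

lemma gen_spec {r : W d → ℕ} {m : ℕ} {v : W d} (hv : v ∈ gen r (m + 1)) :
    ∃ w ∈ gen r m, w.length < v.length ∧ w <+: v := by
  rw [gen, mem_nextGen] at hv
  obtain ⟨w, hw, h, s, hs, rfl⟩ := hv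
  refine ⟨w, hw, ?_, ⟨s, rfl⟩⟩
  have : s.length ≠ 0 := by rw [hs]; exact h
  simp [Nat.pos_of_ne_zero this]

lemma length_ge_of_mem_gen {r : W d → ℕ} : ∀ {m : ℕ} {v : W d}, v ∈ gen r m → m ≤ v.length := by
  intro m
  induction m with
  | zero => intro v _; exact Nat.zero_le _
  | succ m ih =>
    intro v hv
    obtain ⟨w, hw, hlen, _⟩ := gen_spec hv
    exact Nat.lt_of_le_of_lt (ih hw) hlen

lemma ancestor_of_mem_gen {r : W d → ℕ} :
    ∀ {m : ℕ} {i : ℕ}, i < m → ∀ {v : W d}, v ∈ gen r m →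
      ∃ w ∈ gen r i, w.length < v.length ∧ w <+: v := by
  intro m
  induction m with
  | zero => intro i hi; omega
  | succ m ih =>
    intro i hi v hv
    rcases Nat.lt_succ_iff_lt_or_eq.mp hi with hi' | rfl
    · obtain ⟨u, hu, hul, hup⟩ := gen_spec hv
      obtain ⟨w, hw, hwl, hwp⟩ := ih hi' hu
      exact ⟨w, hw, hwl.trans hul, hwp.trans hup⟩
    · exact gen_spec hv

lemma antichain_gen {r : W d → ℕ} :
    ∀ {m : ℕ} {v w : W d}, v ∈ gen r m → w ∈ gen r m → v <+: w → v = w := by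
  intro m
  induction m with
  | zero =>
    intro v w hv hw _
    simp only [gen, Finset.mem_singleton] at hv hw; rw [hv, hw]
  | succ m ih =>
    intro v w hv hw hvw
    rw [gen, mem_nextGen] at hv hw
    obtain ⟨a, ha, ha0, s, hs, rfl⟩ := hv
    obtain ⟨b, hb, hb0, t, ht, rfl⟩ := hw
    have hab : a = b := by
      have h1 : a <+: b ++ t := (List.prefix_append a s).trans hvw
      have h2 : b <+: b ++ t := List.prefix_append b t
      rcases List.prefix_or_prefix_of_prefix h1 h2 with h | h
      · exact ih ha hb h
      · exact (ih hb ha h).symm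
    subst hab
    have : (a ++ s).length = (a ++ t).length := by
      simp [hs, ht]
    exact List.IsPrefix.eq_of_length hvw this

lemma gen_disjoint {r : W d → ℕ} {i m : ℕ} (him : i < m) {v : W d}
    (hvi : v ∈ gen r i) (hvm : v ∈ gen r m) : False := by
  obtain ⟨w, hw, hwl, hwp⟩ := ancestor_of_mem_gen him hvm
  have hev := antichain_gen hw hvi hwp
  rw [hev] at hwl
  omega

/-- ancestors strictly before generation `m`. -/
def anc (r : W d → ℕ) (m : ℕ) : Finset (W d) := (Finset.range m).biUnion (gen r)

lemma mem_anc {r : W d → ℕ} {m : ℕ} {v : W d} :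
    v ∈ anc r m ↔ ∃ i < m, v ∈ gen r i := by
  simp [anc]

lemma gen_subset_anc {r : W d → ℕ} {i m : ℕ} (h : i < m) : gen r i ⊆ anc r m :=
  fun v hv => mem_anc.mpr ⟨i, h, hv⟩

lemma anc_disjoint_gen {r : W d → ℕ} {m : ℕ} {v : W d}
    (hv : v ∈ anc r m) (hvm : v ∈ gen r m) : False := by
  obtain ⟨i, hi, hvi⟩ := mem_anc.mp hv
  exact gen_disjoint hi hvi hvm

lemma nextGen_congr {r r' : W d → ℕ} {T : Finset (W d)} (h : ∀ w ∈ T, r w = r' w) :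
    nextGen r T = nextGen r' T := by
  unfold nextGen
  apply Finset.biUnion_congr rfl
  intro w hw
  rw [h w hw]

lemma gen_congr {r r' : W d → ℕ} {m : ℕ} (h : ∀ w ∈ anc r m, r w = r' w) :
    ∀ i ≤ m, gen r i = gen r' i := by
  intro i hi
  induction i with
  | zero => rfl
  | succ i ih =>
    have hi' : i ≤ m := Nat.le_of_succ_le hi
    have him : i < m := hi
    rw [gen, gen, ih hi']
    apply nextGen_congr
    intro w hw
    exact h w (gen_subset_anc him ((ih hi') ▸ hw))

lemma anc_congr {r r' : W d → ℕ} {m : ℕ} (h : ∀ w ∈ anc r m, r w = r' w) :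
    anc r m = anc r' m := by
  unfold anc
  apply Finset.biUnion_congr rfl
  intro i hi
  exact gen_congr h i (Nat.le_of_lt (Finset.mem_range.mp hi))

lemma card_nextGen {r : W d → ℕ} {T : Finset (W d)}
    (hT : ∀ v ∈ T, ∀ w ∈ T, v <+: w → v = w) :
    (nextGen r T).card = ∑ w ∈ T, phi d (r w) := by
  unfold nextGen
  rw [Finset.card_biUnion]
  · apply Finset.sum_congr rfl
    intro w _
    by_cases h : r w = 0
    · simp [h, phi]
    · simp only [h, if_false, phi]
      rw [Finset.card_image_of_injective _ (fun f g hfg => ?_), Finset.card_univ]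
      · simp [h]
      · have := List.append_cancel_left hfg
        exact List.ofFn_injective this
  · intro v hv w hw hvw
    simp only [Finset.disjoint_left]
    intro x hx hx'
    by_cases h1 : r v = 0
    · simp [h1] at hx
    by_cases h2 : r w = 0
    · simp [h2] at hx'
    simp only [h1, h2, if_false, Finset.mem_image, Finset.mem_univ, true_and] at hx hx'
    obtain ⟨f, rfl⟩ := hx
    obtain ⟨g, hg⟩ := hx'
    have h3 : v <+: w ++ List.ofFn g := ⟨List.ofFn f, hg.symm⟩
    have h4 : w <+: w ++ List.ofFn g := List.prefix_append _ _
    rcases List.prefix_or_prefix_of_prefix h3 h4 with h | h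
    · exact hvw (hT v hv w hw h)
    · exact hvw ((hT w hw v hv h).symm)

lemma pow_card_gen_succ {M : Type*} [CommMonoid M] (x : M) {r : W d → ℕ} (m : ℕ) :
    x ^ (gen r (m + 1)).card = ∏ w ∈ gen r m, x ^ phi d (r w) := by
  rw [gen, card_nextGen (fun v hv w hw h => antichain_gen hv hw h),
    ← Finset.prod_pow_eq_pow_sum]

lemma gen_nonempty_of_succ {r : W d → ℕ} {m : ℕ} (h : (gen r (m + 1)).Nonempty) :
    (gen r m).Nonempty := by
  obtain ⟨v, hv⟩ := h
  rw [gen, mem_nextGen] at hv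
  obtain ⟨w, hw, _⟩ := hv
  exact ⟨w, hw⟩

/-- the radius configuration encoded by a finite set of (word, value) pairs. -/
def ofPairs (k : Finset (List (Fin d) × ℕ)) : List (Fin d) → ℕ :=
  fun w => (k.filter fun p => p.1 = w).sum Prod.snd

def Functional (k : Finset (List (Fin d) × ℕ)) : Prop :=
  ∀ p ∈ k, ∀ q ∈ k, p.1 = q.1 → p = q

lemma filter_eq_singleton {k : Finset (List (Fin d) × ℕ)} (hf : Functional k)
    {w : List (Fin d)} {a : ℕ} (h : (w, a) ∈ k) :
    (k.filter fun p => p.1 = w) = {(w, a)} := by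
  ext q
  simp only [Finset.mem_filter, Finset.mem_singleton]
  constructor
  · rintro ⟨hq, hq1⟩
    exact hf q hq (w, a) h hq1
  · rintro rfl
    exact ⟨h, rfl⟩

lemma ofPairs_eq {k : Finset (List (Fin d) × ℕ)} (hf : Functional k)
    {w : List (Fin d)} {a : ℕ} (h : (w, a) ∈ k) : ofPairs k w = a := by
  rw [ofPairs, filter_eq_singleton hf h, Finset.sum_singleton]

lemma ofPairs_eq' {k : Finset (List (Fin d) × ℕ)} (hf : Functional k)
    {w : List (Fin d)} (h : w ∈ k.image Prod.fst) : (w, ofPairs k w) ∈ k := by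
  obtain ⟨p, hp, hp1⟩ := Finset.mem_image.mp h
  obtain ⟨w', a⟩ := p
  cases hp1
  rw [ofPairs_eq hf hp]
  exact hp

lemma k_eq_image {k : Finset (List (Fin d) × ℕ)} (hf : Functional k) :
    k = (k.image Prod.fst).image (fun w => (w, ofPairs k w)) := by
  ext p
  obtain ⟨w, a⟩ := p
  rw [Finset.mem_image]
  constructor
  · intro hp
    exact ⟨w, Finset.mem_image.mpr ⟨(w, a), hp, rfl⟩, by rw [ofPairs_eq hf hp]⟩
  · rintro ⟨w', hw', hw''⟩
    obtain ⟨rfl, rfl⟩ : w' = w ∧ ofPairs k w' = a := by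
      constructor <;> [exact congrArg Prod.fst hw''; exact congrArg Prod.snd hw'']
    exact ofPairs_eq' hf hw'

/-- A valid encoding of the size-`m` history of the process. -/
def Valid (m : ℕ) (k : Finset (List (Fin d) × ℕ)) : Prop :=
  Functional k ∧ anc (ofPairs k) m = k.image Prod.fst

lemma valid_agree {m : ℕ} {k : Finset (List (Fin d) × ℕ)} (hk : Valid m k)
    {r : List (Fin d) → ℕ} (hr : ∀ p ∈ k, r p.1 = p.2) :
    ∀ i ≤ m, gen (ofPairs k) i = gen r i := by
  apply gen_congr
  intro w hw
  rw [hk.2] at hw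
  have h := ofPairs_eq' hk.1 hw
  exact (hr _ h).symm

lemma valid_anc {m : ℕ} {k : Finset (List (Fin d) × ℕ)} (hk : Valid m k)
    {r : List (Fin d) → ℕ} (hr : ∀ p ∈ k, r p.1 = p.2) :
    anc r m = k.image Prod.fst := by
  rw [← hk.2]
  apply Finset.biUnion_congr rfl
  intro i hi
  exact (valid_agree hk hr i (Nat.le_of_lt (Finset.mem_range.mp hi))).symm

/-- the canonical encoding extracted from a radius configuration. -/
def encode (r : List (Fin d) → ℕ) (m : ℕ) : Finset (List (Fin d) × ℕ) :=
  (anc r m).image fun w => (w, r w)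

lemma encode_functional (r : List (Fin d) → ℕ) (m : ℕ) : Functional (encode r m) := by
  intro p hp q hq hpq
  simp only [encode, Finset.mem_image] at hp hq
  obtain ⟨w, _, rfl⟩ := hp
  obtain ⟨w', _, rfl⟩ := hq
  simp only at hpq
  rw [hpq]

lemma encode_fst (r : List (Fin d) → ℕ) (m : ℕ) :
    (encode r m).image Prod.fst = anc r m := by
  rw [encode, Finset.image_image]
  exact Finset.image_id

lemma encode_holds (r : List (Fin d) → ℕ) (m : ℕ) :
    ∀ p ∈ encode r m, r p.1 = p.2 := by
  intro p hp
  simp only [encode, Finset.mem_image] at hp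
  obtain ⟨w, _, rfl⟩ := hp
  rfl

lemma encode_valid (r : List (Fin d) → ℕ) (m : ℕ) : Valid m (encode r m) := by
  refine ⟨encode_functional r m, ?_⟩
  rw [encode_fst]
  have h : ∀ w ∈ anc r m, r w = ofPairs (encode r m) w := by
    intro w hw
    exact (ofPairs_eq (encode_functional r m)
      (Finset.mem_image.mpr ⟨w, hw, rfl⟩)).symm
  rw [← anc_congr h]

lemma valid_unique {m : ℕ} {k k' : Finset (List (Fin d) × ℕ)}
    (hk : Valid m k) (hk' : Valid m k') {r : List (Fin d) → ℕ}
    (hr : ∀ p ∈ k, r p.1 = p.2) (hr' : ∀ p ∈ k', r p.1 = p.2) : k = k' := by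
  have hT : k.image Prod.fst = k'.image Prod.fst := by
    rw [← valid_anc hk hr, ← valid_anc hk' hr']
  rw [k_eq_image hk.1, k_eq_image hk'.1, hT]
  apply Finset.image_congr
  intro w hw
  have h1 : (w, ofPairs k w) ∈ k := ofPairs_eq' hk.1 (hT.symm ▸ hw)
  have h2 : (w, ofPairs k' w) ∈ k' := ofPairs_eq' hk'.1 hw
  have e : ofPairs k w = ofPairs k' w := by
    have e1 : r w = ofPairs k w := hr _ h1
    have e2 : r w = ofPairs k' w := hr' _ h2
    rw [← e1, ← e2]
  simp only [e]

/-- the generation-`m` set determined by a valid encoding. -/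
def genOf (k : Finset (List (Fin d) × ℕ)) (m : ℕ) : Finset (List (Fin d)) :=
  gen (ofPairs k) m

lemma valid_gen_eq {m : ℕ} {k : Finset (List (Fin d) × ℕ)} (hk : Valid m k)
    {r : List (Fin d) → ℕ} (hr : ∀ p ∈ k, r p.1 = p.2) :
    gen r m = genOf k m := (valid_agree hk hr m le_rfl).symm

lemma encode_genOf (r : List (Fin d) → ℕ) (m : ℕ) :
    genOf (encode r m) m = gen r m :=
  (valid_gen_eq (encode_valid r m) (encode_holds r m)).symm

lemma genOf_disjoint_fst {m : ℕ} {k : Finset (List (Fin d) × ℕ)} (hk : Valid m k)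
    {w : List (Fin d)} (hw : w ∈ genOf k m) (hw' : w ∈ k.image Prod.fst) : False := by
  rw [← hk.2] at hw'
  exact anc_disjoint_gen hw' hw



section Prob

open MeasureTheory ProbabilityTheory
open scoped ENNReal

variable {d : ℕ} {Ω : Type*} [MeasurableSpace Ω]

def inj (d : ℕ) : List (Fin d) → TdVertex d := fun w => some (0, w)

lemma inj_injective {d : ℕ} : Function.Injective (inj d) := fun a b h => by
  simpa [inj] using h

def unInj {d : ℕ} : TdVertex d → List (Fin d) := fun u => (Option.map Prod.snd u).getD []

@[simp] lemma unInj_inj {d : ℕ} (w : List (Fin d)) : unInj (inj d w) = w := rfl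

/-- the radius field on words, pulled back from branch `0` of the tree. -/
def RwF (R : TdVertex d → Ω → ℕ) (ω : Ω) : List (Fin d) → ℕ := fun w => R (inj d w) ω

/-- the cylinder event described by a finite set of (word, value) pairs. -/
def Ek (R : TdVertex d → Ω → ℕ) (k : Finset (List (Fin d) × ℕ)) : Set Ω :=
  {ω | ∀ p ∈ k, R (inj d p.1) ω = p.2}

lemma Ek_eq_biInter (R : TdVertex d → Ω → ℕ) (k : Finset (List (Fin d) × ℕ)) :
    Ek R k = ⋂ p ∈ (k : Set (List (Fin d) × ℕ)), {ω | R (inj d p.1) ω = p.2} := by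
  ext ω; simp [Ek]

lemma measurableSet_eq_R {R : TdVertex d → Ω → ℕ} (hRMeas : ∀ u, Measurable (R u))
    (u : TdVertex d) (v : ℕ) : MeasurableSet {ω | R u ω = v} :=
  hRMeas u (measurableSet_singleton v)

lemma measurable_Ek {R : TdVertex d → Ω → ℕ} (hRMeas : ∀ u, Measurable (R u))
    (k : Finset (List (Fin d) × ℕ)) : MeasurableSet (Ek R k) := by
  rw [Ek_eq_biInter]
  exact MeasurableSet.biInter k.countable_toSet
    (fun p _ => hRMeas (inj d p.1) (measurableSet_singleton p.2))

lemma Ek_encode_mem {R : TdVertex d → Ω → ℕ} (m : ℕ) (ω : Ω) :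
    ω ∈ Ek R (encode (RwF R ω) m) := fun p hp => encode_holds _ m p hp

lemma iUnion_Ek (R : TdVertex d → Ω → ℕ) (m : ℕ) :
    ⋃ k : {k : Finset (List (Fin d) × ℕ) // Valid m k}, Ek R k.1 = Set.univ := by
  apply Set.eq_univ_of_forall
  intro ω
  exact Set.mem_iUnion.mpr ⟨⟨encode (RwF R ω) m, encode_valid _ m⟩, Ek_encode_mem m ω⟩

lemma disjoint_Ek (R : TdVertex d → Ω → ℕ) (m : ℕ) :
    Pairwise (Function.onFun Disjoint fun k : {k : Finset (List (Fin d) × ℕ) // Valid m k} => Ek R k.1) := by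
  intro k k' hkk'
  rw [Function.onFun, Set.disjoint_left]
  intro ω hω hω'
  exact hkk' (Subtype.ext (valid_unique k.2 k'.2 (r := RwF R ω) hω hω'))

lemma gen_eq_on_Ek {R : TdVertex d → Ω → ℕ} {m : ℕ} {k : Finset (List (Fin d) × ℕ)}
    (hk : Valid m k) {ω : Ω} (hω : ω ∈ Ek R k) :
    gen (RwF R ω) m = genOf k m :=
  valid_gen_eq hk hω

lemma genSet_eq (R : TdVertex d → Ω → ℕ) (m : ℕ) (Q : Finset (List (Fin d)) → Prop) :
    {ω | Q (gen (RwF R ω) m)}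
      = ⋃ k : {k : Finset (List (Fin d) × ℕ) // Valid m k ∧ Q (genOf k m)}, Ek R k.1 := by
  ext ω
  simp only [Set.mem_setOf_eq, Set.mem_iUnion]
  constructor
  · intro hQ
    refine ⟨⟨encode (RwF R ω) m, encode_valid _ m, ?_⟩, Ek_encode_mem m ω⟩
    rwa [encode_genOf]
  · rintro ⟨⟨k, hk, hQ⟩, hω⟩
    have := gen_eq_on_Ek hk hω
    rwa [this]

lemma measurableSet_genSet {R : TdVertex d → Ω → ℕ} (m' : MeasurableSpace Ω)
    (h : ∀ (w : List (Fin d)) (v : ℕ), MeasurableSet[m'] {ω | R (inj d w) ω = v})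
    (m : ℕ) (Q : Finset (List (Fin d)) → Prop) :
    MeasurableSet[m'] {ω | Q (gen (RwF R ω) m)} := by
  rw [genSet_eq]
  refine MeasurableSet.iUnion (fun k => ?_)
  rw [Ek_eq_biInter]
  exact MeasurableSet.biInter k.1.countable_toSet (fun p _ => h p.1 p.2)

variable (P : Measure Ω) [IsProbabilityMeasure P]

lemma lintegral_partition {R : TdVertex d → Ω → ℕ} (hRMeas : ∀ u, Measurable (R u))
    (m : ℕ) (f : Ω → ℝ≥0∞) :
    ∫⁻ ω, f ω ∂P = ∑' k : {k : Finset (List (Fin d) × ℕ) // Valid m k},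
      ∫⁻ ω in Ek R k.1, f ω ∂P := by
  conv_lhs => rw [← Measure.restrict_univ (μ := P)]
  rw [← iUnion_Ek R m,
    Measure.restrict_iUnion (disjoint_Ek R m) (fun k => measurable_Ek hRMeas k.1),
    lintegral_sum_measure]

lemma lintegral_prod_R {R : TdVertex d → Ω → ℕ} (hRMeas : ∀ u, Measurable (R u))
    (hRIndep : iIndepFun R P)
    (h : TdVertex d → ℕ → ℝ≥0∞) (F : Finset (TdVertex d)) :
    ∫⁻ ω, ∏ u ∈ F, h u (R u ω) ∂P = ∏ u ∈ F, ∫⁻ ω, h u (R u ω) ∂P := by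
  classical
  have hmeas : ∀ u : TdVertex d, Measurable (fun ω => h u (R u ω)) :=
    fun u => (measurable_from_top (f := h u)).comp (hRMeas u)
  have hind : iIndepFun (fun u ω => h u (R u ω)) P :=
    hRIndep.comp (fun u => h u) (fun u => measurable_from_top)
  induction F using Finset.cons_induction with
  | empty => simp
  | cons a F ha ih =>
    have hIF0 : IndepFun (∏ j ∈ F, fun ω => h j (R j ω)) (fun ω => h a (R a ω)) P :=
      hind.indepFun_finsetProd_of_notMem hmeas ha
    have hprodfn : (∏ j ∈ F, fun ω => h j (R j ω)) = fun ω => ∏ j ∈ F, h j (R j ω) :=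
      funext fun ω => Finset.prod_apply ω F _
    have hIF : IndepFun (fun ω => ∏ j ∈ F, h j (R j ω)) (fun ω => h a (R a ω)) P :=
      hprodfn ▸ hIF0
    have hmF : Measurable (fun ω => ∏ j ∈ F, h j (R j ω)) :=
      Finset.measurable_prod F (fun j _ => hmeas j)
    have key := lintegral_mul_eq_lintegral_mul_lintegral_of_indepFun
      (μ := P) hmF (hmeas a) hIF
    simp only [Pi.mul_apply] at key
    simp only [Finset.prod_cons]
    calc ∫⁻ ω, h a (R a ω) * ∏ u ∈ F, h u (R u ω) ∂P
        = ∫⁻ ω, (∏ u ∈ F, h u (R u ω)) * h a (R a ω) ∂P := by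
          simp_rw [mul_comm]
      _ = (∫⁻ ω, ∏ u ∈ F, h u (R u ω) ∂P) * ∫⁻ ω, h a (R a ω) ∂P := key
      _ = (∏ u ∈ F, ∫⁻ ω, h u (R u ω) ∂P) * ∫⁻ ω, h a (R a ω) ∂P := by rw [ih]
      _ = (∫⁻ ω, h a (R a ω) ∂P) * ∏ u ∈ F, ∫⁻ ω, h u (R u ω) ∂P := mul_comm _ _

lemma lintegral_comp_R {R : TdVertex d → Ω → ℕ} (hRMeas : ∀ u, Measurable (R u))
    (h : ℕ → ℝ≥0∞) (u : TdVertex d) :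
    ∫⁻ ω, h (R u ω) ∂P = ∑' v, h v * P {ω | R u ω = v} := by
  have hpt : ∀ ω, h (R u ω)
      = ∑' v, Set.indicator {ω' | R u ω' = v} (fun _ => h v) ω := by
    intro ω
    rw [tsum_eq_single (R u ω)]
    · rw [Set.indicator_of_mem (by exact rfl)]
    · intro v hv
      exact Set.indicator_of_notMem (fun hmem => hv (Eq.symm hmem)) _
  calc ∫⁻ ω, h (R u ω) ∂P
      = ∫⁻ ω, ∑' v, Set.indicator {ω' | R u ω' = v} (fun _ => h v) ω ∂P :=
        lintegral_congr hpt
    _ = ∑' v, ∫⁻ ω, Set.indicator {ω' | R u ω' = v} (fun _ => h v) ω ∂P :=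
        lintegral_tsum (fun v =>
          (measurable_const.indicator (measurableSet_eq_R hRMeas u v)).aemeasurable)
    _ = ∑' v, h v * P {ω | R u ω = v} := by
        apply tsum_congr
        intro v
        rw [lintegral_indicator (measurableSet_eq_R hRMeas u v), setLIntegral_const]

lemma indicator_single_comp {R : TdVertex d → Ω → ℕ} (u : TdVertex d) (c : ℕ) :
    (fun ω => (if R u ω = c then (1 : ℝ≥0∞) else 0))
      = Set.indicator {ω | R u ω = c} (fun _ => 1) := by
  funext ω
  rw [Set.indicator_apply]
  simp only [Set.mem_setOf_eq]

lemma lintegral_single_ind {R : TdVertex d → Ω → ℕ} (hRMeas : ∀ u, Measurable (R u))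
    (u : TdVertex d) (c : ℕ) :
    ∫⁻ ω, (if R u ω = c then (1 : ℝ≥0∞) else 0) ∂P = P {ω | R u ω = c} := by
  rw [indicator_single_comp, lintegral_indicator (measurableSet_eq_R hRMeas u c),
    setLIntegral_one]

/-- the central factorization: expectation of (cylinder indicator) × (product over a
disjoint finite set of words of functions of the radii). -/
lemma lintegral_ind_mul_prod {R : TdVertex d → Ω → ℕ} (hRMeas : ∀ u, Measurable (R u))
    (hRIndep : iIndepFun R P)
    {k : Finset (List (Fin d) × ℕ)} (hk : Functional k)
    {S : Finset (List (Fin d))} (hTS : ∀ w ∈ S, w ∉ k.image Prod.fst)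
    (g : ℕ → ℝ≥0∞) :
    ∫⁻ ω, Set.indicator (Ek R k) (fun ω' => ∏ w ∈ S, g (R (inj d w) ω')) ω ∂P
      = (∏ w ∈ k.image Prod.fst, P {ω | R (inj d w) ω = ofPairs k w})
        * ∏ w ∈ S, ∫⁻ ω, g (R (inj d w) ω) ∂P := by
  classical
  set T := k.image Prod.fst with hTdef
  have hdisj : Disjoint T S := Finset.disjoint_right.mpr hTS
  set H : TdVertex d → ℕ → ℝ≥0∞ := fun u v =>
    if unInj u ∈ T then (if v = ofPairs k (unInj u) then 1 else 0) else g v with hH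
  have hpoint : ∀ ω, Set.indicator (Ek R k) (fun ω' => ∏ w ∈ S, g (R (inj d w) ω')) ω
      = ∏ u ∈ (T ∪ S).image (inj d), H u (R u ω) := by
    intro ω
    rw [Finset.prod_image (fun a _ b _ hab => inj_injective hab),
      Finset.prod_union hdisj]
    have hSfact : ∀ w ∈ S, H (inj d w) (R (inj d w) ω) = g (R (inj d w) ω) := by
      intro w hw
      simp only [hH, unInj_inj, hTS w hw, if_false]
    rw [Finset.prod_congr rfl hSfact]
    by_cases hω : ω ∈ Ek R k
    · rw [Set.indicator_of_mem hω]
      have hone : ∀ w ∈ T, H (inj d w) (R (inj d w) ω) = 1 := by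
        intro w hw
        have hmem : (w, ofPairs k w) ∈ k := ofPairs_eq' hk hw
        simp [hH, hw, hω _ hmem]
      rw [Finset.prod_congr rfl hone, Finset.prod_const_one, one_mul]
    · rw [Set.indicator_of_notMem hω]
      obtain ⟨p, hp, hne⟩ : ∃ p ∈ k, R (inj d p.1) ω ≠ p.2 := by
        by_contra hcon
        push_neg at hcon
        exact hω hcon
      have hw : p.1 ∈ T := Finset.mem_image.mpr ⟨p, hp, rfl⟩
      have hzero : H (inj d p.1) (R (inj d p.1) ω) = 0 := by
        have hval : ofPairs k p.1 = p.2 := ofPairs_eq hk (by simpa using hp)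
        simp only [hH, unInj_inj, if_pos hw, hval, if_neg hne]
      rw [Finset.prod_eq_zero hw hzero, zero_mul]
  calc ∫⁻ ω, Set.indicator (Ek R k) (fun ω' => ∏ w ∈ S, g (R (inj d w) ω')) ω ∂P
      = ∫⁻ ω, ∏ u ∈ (T ∪ S).image (inj d), H u (R u ω) ∂P := lintegral_congr hpoint
    _ = ∏ u ∈ (T ∪ S).image (inj d), ∫⁻ ω, H u (R u ω) ∂P :=
        lintegral_prod_R P hRMeas hRIndep H _
    _ = (∏ w ∈ T, ∫⁻ ω, H (inj d w) (R (inj d w) ω) ∂P)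
        * ∏ w ∈ S, ∫⁻ ω, H (inj d w) (R (inj d w) ω) ∂P := by
        rw [Finset.prod_image (fun a _ b _ hab => inj_injective hab),
          Finset.prod_union hdisj]
    _ = (∏ w ∈ T, P {ω | R (inj d w) ω = ofPairs k w})
        * ∏ w ∈ S, ∫⁻ ω, g (R (inj d w) ω) ∂P := by
        congr 1
        · apply Finset.prod_congr rfl
          intro w hw
          have : (fun ω => H (inj d w) (R (inj d w) ω))
              = fun ω => (if R (inj d w) ω = ofPairs k w then (1 : ℝ≥0∞) else 0) := by
            funext ω
            simp only [hH, unInj_inj, hw, if_true]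
            congr
          rw [this, lintegral_single_ind P hRMeas]
        · apply Finset.prod_congr rfl
          intro w hw
          have : (fun ω => H (inj d w) (R (inj d w) ω))
              = fun ω => g (R (inj d w) ω) := by
            funext ω
            simp only [hH, unInj_inj, hTS w hw, if_false]
          rw [this]

lemma P_Ek {R : TdVertex d → Ω → ℕ} (hRMeas : ∀ u, Measurable (R u))
    (hRIndep : iIndepFun R P)
    {k : Finset (List (Fin d) × ℕ)} (hk : Functional k) :
    P (Ek R k) = ∏ w ∈ k.image Prod.fst, P {ω | R (inj d w) ω = ofPairs k w} := by
  have h := lintegral_ind_mul_prod P hRMeas hRIndep hk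
    (S := (∅ : Finset (List (Fin d)))) (by simp) (fun _ => (1 : ℝ≥0∞))
  simp only [Finset.prod_empty, mul_one] at h
  rw [← h, lintegral_indicator (measurable_Ek hRMeas k)]
  simp

lemma piece_prod {R : TdVertex d → Ω → ℕ} (hRMeas : ∀ u, Measurable (R u))
    (hRIndep : iIndepFun R P)
    {m : ℕ} {k : Finset (List (Fin d) × ℕ)} (hk : Valid m k) (g : ℕ → ℝ≥0∞) :
    ∫⁻ ω in Ek R k, ∏ w ∈ gen (RwF R ω) m, g (R (inj d w) ω) ∂P
      = P (Ek R k) * ∏ w ∈ genOf k m, ∫⁻ ω, g (R (inj d w) ω) ∂P := by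
  have hTS : ∀ w ∈ genOf k m, w ∉ k.image Prod.fst :=
    fun w hw hw' => (genOf_disjoint_fst hk hw hw').elim
  calc ∫⁻ ω in Ek R k, ∏ w ∈ gen (RwF R ω) m, g (R (inj d w) ω) ∂P
      = ∫⁻ ω in Ek R k, ∏ w ∈ genOf k m, g (R (inj d w) ω) ∂P :=
        setLIntegral_congr_fun (measurable_Ek hRMeas k)
          (fun ω hω => by rw [gen_eq_on_Ek hk hω])
    _ = ∫⁻ ω, Set.indicator (Ek R k) (fun ω' => ∏ w ∈ genOf k m, g (R (inj d w) ω')) ω ∂P :=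
        (lintegral_indicator (measurable_Ek hRMeas k) _).symm
    _ = (∏ w ∈ k.image Prod.fst, P {ω | R (inj d w) ω = ofPairs k w})
        * ∏ w ∈ genOf k m, ∫⁻ ω, g (R (inj d w) ω) ∂P :=
        lintegral_ind_mul_prod P hRMeas hRIndep hk.1 hTS g
    _ = P (Ek R k) * ∏ w ∈ genOf k m, ∫⁻ ω, g (R (inj d w) ω) ∂P := by
        rw [P_Ek P hRMeas hRIndep hk.1]

lemma piece_const {R : TdVertex d → Ω → ℕ} (hRMeas : ∀ u, Measurable (R u))
    {m : ℕ} {k : Finset (List (Fin d) × ℕ)} (hk : Valid m k) (c : ℝ≥0∞) :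
    ∫⁻ ω in Ek R k, c ^ (gen (RwF R ω) m).card ∂P = P (Ek R k) * c ^ (genOf k m).card := by
  calc ∫⁻ ω in Ek R k, c ^ (gen (RwF R ω) m).card ∂P
      = ∫⁻ _ω in Ek R k, c ^ (genOf k m).card ∂P :=
        setLIntegral_congr_fun (measurable_Ek hRMeas k)
          (fun ω hω => by rw [gen_eq_on_Ek hk hω])
    _ = c ^ (genOf k m).card * P (Ek R k) := setLIntegral_const _ _
    _ = P (Ek R k) * c ^ (genOf k m).card := mul_comm _ _

lemma main_bound {R : TdVertex d → Ω → ℕ} (hRMeas : ∀ u, Measurable (R u))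
    (hRIndep : iIndepFun R P)
    (pk : ℕ → ℝ≥0∞) (hId : ∀ u v, P {ω | R u ω = v} = pk v)
    (ρ : ℝ≥0∞) (hρ1 : ρ ≤ 1) (hfix : (∑' v, ρ ^ phi d v * pk v) ≤ ρ) :
    ∀ m, ∫⁻ ω, ρ ^ (gen (RwF R ω) m).card ∂P ≤ ρ := by
  intro m
  induction m with
  | zero =>
    have : ∀ ω : Ω, ρ ^ (gen (RwF R ω) 0).card = ρ := by
      intro ω
      rw [show (gen (RwF R ω) 0) = {[]} from rfl]
      simp
    rw [lintegral_congr this, lintegral_const, measure_univ, mul_one]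
  | succ m ih =>
    set g : ℕ → ℝ≥0∞ := fun v => ρ ^ phi d v with hg
    set fρ : ℝ≥0∞ := ∑' v, g v * pk v with hfρ
    have hsingle : ∀ u : TdVertex d, ∫⁻ ω, g (R u ω) ∂P = fρ := by
      intro u
      rw [lintegral_comp_R P hRMeas g u]
      apply tsum_congr
      intro v
      rw [hId u v]
    have h1 : ∀ ω, ρ ^ (gen (RwF R ω) (m + 1)).card
        = ∏ w ∈ gen (RwF R ω) m, g (R (inj d w) ω) := by
      intro ω
      exact pow_card_gen_succ ρ m
    calc ∫⁻ ω, ρ ^ (gen (RwF R ω) (m + 1)).card ∂P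
        = ∫⁻ ω, ∏ w ∈ gen (RwF R ω) m, g (R (inj d w) ω) ∂P := lintegral_congr h1
      _ = ∑' k : {k : Finset (List (Fin d) × ℕ) // Valid m k},
            ∫⁻ ω in Ek R k.1, ∏ w ∈ gen (RwF R ω) m, g (R (inj d w) ω) ∂P :=
          lintegral_partition P hRMeas m _
      _ = ∑' k : {k : Finset (List (Fin d) × ℕ) // Valid m k},
            ∫⁻ ω in Ek R k.1, fρ ^ (gen (RwF R ω) m).card ∂P := by
          apply tsum_congr
          intro k
          rw [piece_prod P hRMeas hRIndep k.2 g, piece_const P hRMeas k.2 fρ]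
          congr 1
          rw [Finset.prod_congr rfl (fun w _ => hsingle (inj d w)), Finset.prod_const]
      _ = ∫⁻ ω, fρ ^ (gen (RwF R ω) m).card ∂P := (lintegral_partition P hRMeas m _).symm
      _ ≤ ∫⁻ ω, ρ ^ (gen (RwF R ω) m).card ∂P :=
          lintegral_mono (fun ω => pow_le_pow_left₀ zero_le hfix _)
      _ ≤ ρ := ih

lemma extinct_bound {R : TdVertex d → Ω → ℕ} (hRMeas : ∀ u, Measurable (R u))
    (hRIndep : iIndepFun R P)
    (pk : ℕ → ℝ≥0∞) (hId : ∀ u v, P {ω | R u ω = v} = pk v)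
    (ρ : ℝ≥0∞) (hρ1 : ρ ≤ 1) (hfix : (∑' v, ρ ^ phi d v * pk v) ≤ ρ) (m : ℕ) :
    P {ω | gen (RwF R ω) m = ∅} ≤ ρ := by
  have hmeasS : MeasurableSet {ω | gen (RwF R ω) m = ∅} :=
    measurableSet_genSet (m' := inferInstance)
      (fun w v => hRMeas (inj d w) (measurableSet_singleton v)) m (· = ∅)
  have h1 : P {ω | gen (RwF R ω) m = ∅}
      = ∫⁻ ω, Set.indicator {ω' | gen (RwF R ω') m = ∅} 1 ω ∂P :=
    (lintegral_indicator_one hmeasS).symm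
  rw [h1]
  refine le_trans (lintegral_mono ?_) (main_bound P hRMeas hRIndep pk hId ρ hρ1 hfix m)
  intro ω
  rw [Set.indicator_apply]
  split_ifs with hω
  · simp only [Pi.one_apply]
    have hc : (gen (RwF R ω) m).card = 0 := by
      rw [Finset.card_eq_zero]
      exact hω
    rw [hc, pow_zero]
  · exact zero_le

end Prob

section Survive

variable {d : ℕ}

lemma lcpLen_append (w s : List (Fin d)) : lcpLen w (w ++ s) = w.length := by
  induction w with
  | nil => cases s <;> rfl
  | cons a as ih => simp [lcpLen, ih]

lemma distFull_inj_append (w s : List (Fin d)) :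
    distFull (inj d w) (inj d (w ++ s)) = s.length := by
  show distFull (some (0, w)) (some (0, w ++ s)) = s.length
  rw [distFull]
  simp [lcpLen_append]

lemma gen_mem_reach {Ω : Type*} (R : TdVertex d → Ω → ℕ) (ω : Ω) (h0 : R none ω ≠ 0) :
    ∀ m, ∀ w ∈ gen (RwF R ω) m,
      inj d w ∈ reachSet distFull none (fun u => R u ω) (m + 1) := by
  intro m
  induction m with
  | zero =>
    intro w hw
    have hgen0 : gen (RwF R ω) 0 = ({[]} : Finset (List (Fin d))) := rfl
    rw [hgen0, Finset.mem_singleton] at hw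
    subst hw
    rw [reachSet]
    refine Set.mem_biUnion (show (none : TdVertex d) ∈ reachSet distFull none (fun u => R u ω) 0 from rfl) ?_
    show distFull none (inj d List.nil) ≤ R none ω
    have h1 : distFull none (inj d List.nil) = 1 := rfl
    omega
  | succ m ih =>
    intro w' hw'
    rw [gen, mem_nextGen] at hw'
    obtain ⟨w, hw, hr, s, hs, rfl⟩ := hw'
    rw [reachSet]
    refine Set.mem_biUnion (ih w hw) ?_
    show distFull (inj d w) (inj d (w ++ s)) ≤ R (inj d w) ω
    rw [distFull_inj_append, hs]
    exact le_rfl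

lemma cluster_infinite_of {Ω : Type*} (R : TdVertex d → Ω → ℕ) (ω : Ω) (h0 : R none ω ≠ 0)
    (hne : ∀ m, (gen (RwF R ω) m).Nonempty) :
    (cluster distFull none fun u => R u ω).Infinite := by
  have key : ∀ m : ℕ, ∃ x ∈ cluster distFull none fun u => R u ω, m ≤ (unInj x).length := by
    intro m
    obtain ⟨w, hw⟩ := hne m
    refine ⟨inj d w, ?_, ?_⟩
    · exact Set.mem_iUnion.mpr ⟨m + 1, gen_mem_reach R ω h0 m w hw⟩
    · rw [unInj_inj]
      exact length_ge_of_mem_gen hw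
  intro hfin
  obtain ⟨N, hN⟩ := (hfin.image (fun x => (unInj x).length)).bddAbove
  obtain ⟨x, hx, hxl⟩ := key (N + 1)
  have : (unInj x).length ≤ N := hN (Set.mem_image_of_mem _ hx)
  omega

end Survive

lemma pow_one_sub_le {ε : ℝ} (hε0 : 0 ≤ ε) (hε1 : ε ≤ 1) (M : ℕ) :
    (1 - ε) ^ M ≤ 1 - ε * M + ε ^ 2 * (M : ℝ) ^ 2 := by
  have hy0 : (0:ℝ) ≤ 1 - ε := by linarith
  have hy1 : (1:ℝ) - ε ≤ 1 := by linarith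
  have hgeom : (1:ℝ) - (1 - ε) ^ M = ε * ∑ j ∈ Finset.range M, (1 - ε) ^ j := by
    have h := geom_sum_mul (1 - ε) M
    have h2 : (∑ j ∈ Finset.range M, (1 - ε) ^ j) * (1 - ε - 1) = (1 - ε) ^ M - 1 := h
    nlinarith [h2]
  have hsum_ge : (M : ℝ) * (1 - ε) ^ M ≤ ∑ j ∈ Finset.range M, (1 - ε) ^ j := by
    calc (M : ℝ) * (1 - ε) ^ M = ∑ _j ∈ Finset.range M, (1 - ε) ^ M := by
          rw [Finset.sum_const, Finset.card_range, nsmul_eq_mul]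
      _ ≤ ∑ j ∈ Finset.range M, (1 - ε) ^ j :=
          Finset.sum_le_sum (fun j hj =>
            pow_le_pow_of_le_one hy0 hy1 (le_of_lt (Finset.mem_range.mp hj)))
  have hbern : 1 - ε * M ≤ (1 - ε) ^ M := by
    have h := one_add_mul_le_pow (a := -ε) (by linarith) M
    have h2 : 1 + (M : ℝ) * (-ε) ≤ (1 + -ε) ^ M := h
    have h3 : (1 : ℝ) + -ε = 1 - ε := by ring
    rw [h3] at h2
    linarith
  nlinarith [mul_le_mul_of_nonneg_left hsum_ge hε0,
    mul_le_mul_of_nonneg_left hbern (mul_nonneg hε0 (Nat.cast_nonneg M))]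

lemma exists_fixedpoint (d n : ℕ) (hd : 2 ≤ d) (hn : 1 ≤ n) (p : ℝ) (hp0 : 0 < p) (hp1 : p < 1)
    (hcrit : 1 < (p * (d : ℝ) + 1 - p) ^ n - (1 - p) ^ n) :
    ∃ ε : ℝ, 0 < ε ∧ ε ≤ 1/2 ∧
      (∑ v ∈ Finset.range (n + 1),
        (1 - ε) ^ phi d v * ((n.choose v : ℝ) * p ^ v * (1 - p) ^ (n - v))) ≤ 1 - ε := by
  set q : ℝ := 1 - p with hq
  have hq0 : 0 ≤ q := by rw [hq]; linarith
  set b : ℕ → ℝ := fun v => (n.choose v : ℝ) * p ^ v * q ^ (n - v) with hb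
  have hbnn : ∀ v, 0 ≤ b v := fun v =>
    mul_nonneg (mul_nonneg (Nat.cast_nonneg _) (pow_nonneg hp0.le _)) (pow_nonneg hq0 _)
  have hsum1 : ∑ v ∈ Finset.range (n + 1), b v = 1 := by
    have h := add_pow p q n
    have hpq : p + q = 1 := by rw [hq]; ring
    rw [hpq, one_pow] at h
    calc ∑ v ∈ Finset.range (n + 1), b v
        = ∑ v ∈ Finset.range (n + 1), p ^ v * q ^ (n - v) * (n.choose v : ℝ) :=
          Finset.sum_congr rfl (fun v _ => by rw [hb]; ring)
      _ = 1 := h.symm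
  have hsumd : ∑ v ∈ Finset.range (n + 1), b v * (d : ℝ) ^ v = (p * d + q) ^ n := by
    have h := add_pow (p * (d : ℝ)) q n
    calc ∑ v ∈ Finset.range (n + 1), b v * (d : ℝ) ^ v
        = ∑ v ∈ Finset.range (n + 1), (p * (d : ℝ)) ^ v * q ^ (n - v) * (n.choose v : ℝ) :=
          Finset.sum_congr rfl (fun v _ => by rw [hb, mul_pow]; ring)
      _ = (p * d + q) ^ n := h.symm
  have hsumd2 : ∑ v ∈ Finset.range (n + 1), b v * ((d : ℝ) ^ v) ^ 2
      = (p * (d : ℝ) ^ 2 + q) ^ n := by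
    have h := add_pow (p * (d : ℝ) ^ 2) q n
    calc ∑ v ∈ Finset.range (n + 1), b v * ((d : ℝ) ^ v) ^ 2
        = ∑ v ∈ Finset.range (n + 1), (p * (d : ℝ) ^ 2) ^ v * q ^ (n - v) * (n.choose v : ℝ) := by
          refine Finset.sum_congr rfl (fun v _ => ?_)
          have hdd : ((d : ℝ) ^ v) ^ 2 = ((d : ℝ) ^ 2) ^ v := by
            rw [← pow_mul, ← pow_mul, Nat.mul_comm]
          rw [hb, hdd, mul_pow]
          ring
      _ = (p * (d : ℝ) ^ 2 + q) ^ n := h.symm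
  set μt : ℝ := (p * d + q) ^ n with hμt
  set κ : ℝ := (p * (d : ℝ) ^ 2 + q) ^ n with hκ
  have hb0 : b 0 = q ^ n := by simp [hb]
  have hμ' : 1 < μt - q ^ n := by
    have hrw : p * (d : ℝ) + q = p * (d : ℝ) + 1 - p := by rw [hq]; ring
    rw [hμt, hrw]
    exact hcrit
  have hκpos : 0 < κ := by
    rw [hκ]
    apply pow_pos
    have hd0 : (0:ℝ) < (d : ℝ) ^ 2 := by
      have : (0:ℝ) < (d : ℝ) := by
        have : (2:ℝ) ≤ (d : ℝ) := by exact_mod_cast hd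
        linarith
      positivity
    nlinarith
  set ε : ℝ := min (1/2) ((μt - q ^ n - 1) / κ) with hε
  have hεpos : 0 < ε := lt_min (by norm_num) (div_pos (by linarith) hκpos)
  have hε12 : ε ≤ 1/2 := min_le_left _ _
  have hε1 : ε ≤ 1 := by linarith
  have hεκ : ε * κ ≤ μt - q ^ n - 1 := by
    have hle : ε ≤ (μt - q ^ n - 1) / κ := min_le_right _ _
    calc ε * κ ≤ ((μt - q ^ n - 1) / κ) * κ := mul_le_mul_of_nonneg_right hle hκpos.le
      _ = μt - q ^ n - 1 := div_mul_cancel₀ _ hκpos.ne'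
  refine ⟨ε, hεpos, hε12, ?_⟩
  have hphi0 : phi d 0 = 0 := rfl
  have hphis : ∀ v : ℕ, phi d (v + 1) = d ^ (v + 1) := fun v => by
    simp [phi]
  -- identities for the shifted sums
  have hS0 : ∑ v ∈ Finset.range n, b (v + 1) = 1 - b 0 := by
    have h := Finset.sum_range_succ' b n
    rw [hsum1] at h
    linarith
  have hS1 : ∑ v ∈ Finset.range n, b (v + 1) * (d : ℝ) ^ (v + 1) = μt - b 0 := by
    have h := Finset.sum_range_succ' (fun v => b v * (d : ℝ) ^ v) n
    rw [hsumd] at h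
    simp only [pow_zero, mul_one] at h
    linarith
  have hS2 : ∑ v ∈ Finset.range n, b (v + 1) * ((d : ℝ) ^ (v + 1)) ^ 2 = κ - b 0 := by
    have h := Finset.sum_range_succ' (fun v => b v * ((d : ℝ) ^ v) ^ 2) n
    rw [hsumd2] at h
    simp only [pow_zero, one_pow, mul_one] at h
    linarith
  calc ∑ v ∈ Finset.range (n + 1), (1 - ε) ^ phi d v * b v
      = (∑ v ∈ Finset.range n, (1 - ε) ^ phi d (v + 1) * b (v + 1))
        + (1 - ε) ^ phi d 0 * b 0 :=
        Finset.sum_range_succ' _ n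
    _ = (∑ v ∈ Finset.range n, (1 - ε) ^ (d ^ (v + 1)) * b (v + 1)) + b 0 := by
        simp only [hphi0, pow_zero, one_mul, hphis]
    _ ≤ (∑ v ∈ Finset.range n,
          (1 - ε * (d : ℝ) ^ (v + 1) + ε ^ 2 * ((d : ℝ) ^ (v + 1)) ^ 2) * b (v + 1)) + b 0 := by
        apply add_le_add_left
        apply Finset.sum_le_sum
        intro v _
        apply mul_le_mul_of_nonneg_right _ (hbnn (v + 1))
        have h := pow_one_sub_le hεpos.le hε1 (d ^ (v + 1))
        rwa [Nat.cast_pow] at h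
    _ = (∑ v ∈ Finset.range n, b (v + 1))
        - ε * (∑ v ∈ Finset.range n, b (v + 1) * (d : ℝ) ^ (v + 1))
        + ε ^ 2 * (∑ v ∈ Finset.range n, b (v + 1) * ((d : ℝ) ^ (v + 1)) ^ 2) + b 0 := by
        have hterm : ∀ v ∈ Finset.range n,
            (1 - ε * (d : ℝ) ^ (v + 1) + ε ^ 2 * ((d : ℝ) ^ (v + 1)) ^ 2) * b (v + 1)
              = b (v + 1) - ε * (b (v + 1) * (d : ℝ) ^ (v + 1))
                + ε ^ 2 * (b (v + 1) * ((d : ℝ) ^ (v + 1)) ^ 2) := fun v _ => by ring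
        rw [Finset.sum_congr rfl hterm, Finset.sum_add_distrib, Finset.sum_sub_distrib,
          ← Finset.mul_sum, ← Finset.mul_sum]
    _ = 1 - ε * (μt - b 0) + ε ^ 2 * (κ - b 0) := by
        rw [hS0, hS1, hS2]
        ring
    _ ≤ 1 - ε := by
        rw [hb0]
        have hqn0 : 0 ≤ q ^ n := pow_nonneg hq0 n
        nlinarith [mul_le_mul_of_nonneg_left hεκ hεpos.le, sq_nonneg ε,
          mul_nonneg hεpos.le hqn0, mul_nonneg (mul_nonneg hεpos.le hεpos.le) hqn0]

end CPaux

open CPaux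

/-- Cone percolation on `T_d` with binomial radius of influence,
`R ~ Binomial(n, p)`, i.e. `P[R = k] = C(n,k) p^k (1-p)^{n-k}` for `k = 0, …, n`,
`0 < p < 1`, `n ≥ 1`.  If `(p d + 1 - p)^n - (1 - p)^n > 1` then `P[V] > 0`. -/
theorem conePercolation_binomial_survives
    (d n : ℕ) (hd : 2 ≤ d) (hn : 1 ≤ n) (p : ℝ) (hp0 : 0 < p) (hp1 : p < 1)
    (Ω : Type*) [MeasurableSpace Ω] (P : Measure Ω) [IsProbabilityMeasure P]
    (R : TdVertex d → Ω → ℕ) (hRMeas : ∀ u, Measurable (R u))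
    (hRIndep : iIndepFun R P)
    (hRDist : ∀ u k, P {ω | R u ω = k}
      = ENNReal.ofReal ((n.choose k : ℝ) * p ^ k * (1 - p) ^ (n - k)))
    (hcrit : 1 < (p * (d : ℝ) + 1 - p) ^ n - (1 - p) ^ n) :
    0 < P (survival distFull (none : TdVertex d) R) := by
  classical
  obtain ⟨ε, hε0, hε12, hfixR⟩ := exists_fixedpoint d n hd hn p hp0 hp1 hcrit
  set pk : ℕ → ℝ≥0∞ := fun v =>
    ENNReal.ofReal ((n.choose v : ℝ) * p ^ v * (1 - p) ^ (n - v)) with hpk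
  have hId : ∀ u v, P {ω | R u ω = v} = pk v := fun u v => hRDist u v
  set ρ : ℝ≥0∞ := ENNReal.ofReal (1 - ε) with hρ
  have h1ε0 : 0 ≤ 1 - ε := by linarith
  have hρ1 : ρ ≤ 1 := by rw [hρ]; exact ENNReal.ofReal_le_one.mpr (by linarith)
  have hρlt : ρ < 1 := by rw [hρ]; exact ENNReal.ofReal_lt_one.mpr (by linarith)
  have hq0 : (0 : ℝ) ≤ 1 - p := by linarith
  have hfix : (∑' v, ρ ^ phi d v * pk v) ≤ ρ := by
    have hzero : ∀ v ∉ Finset.range (n + 1), ρ ^ phi d v * pk v = 0 := by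
      intro v hv
      rw [Finset.mem_range, not_lt] at hv
      have hch : n.choose v = 0 := Nat.choose_eq_zero_of_lt (by omega)
      simp [hpk, hch]
    rw [tsum_eq_sum hzero]
    have heach : ∀ v ∈ Finset.range (n + 1), ρ ^ phi d v * pk v
        = ENNReal.ofReal
          ((1 - ε) ^ phi d v * ((n.choose v : ℝ) * p ^ v * (1 - p) ^ (n - v))) := by
      intro v _
      rw [hρ, hpk, ← ENNReal.ofReal_pow h1ε0, ← ENNReal.ofReal_mul (pow_nonneg h1ε0 _)]
    rw [Finset.sum_congr rfl heach, ← ENNReal.ofReal_sum_of_nonneg (fun v _ =>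
      mul_nonneg (pow_nonneg h1ε0 _) (mul_nonneg
        (mul_nonneg (Nat.cast_nonneg _) (pow_nonneg hp0.le _)) (pow_nonneg hq0 _)))]
    rw [hρ]
    exact ENNReal.ofReal_le_ofReal hfixR
  set A : ℕ → Set Ω := fun m => {ω | (gen (RwF R ω) m).Nonempty} with hA
  have hAcompl : ∀ m, (A m)ᶜ = {ω | gen (RwF R ω) m = ∅} := by
    intro m
    ext ω
    simp [hA, Finset.not_nonempty_iff_eq_empty]
  have hAm : ∀ m, MeasurableSet (A m) := fun m =>
    measurableSet_genSet (m' := inferInstance)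
      (fun w v => hRMeas (inj d w) (measurableSet_singleton v)) m (fun s => s.Nonempty)
  have hAanti : ∀ m, A (m + 1) ⊆ A m := fun m ω hω => gen_nonempty_of_succ hω
  set Cs : Set Ω := ⋂ m, A m with hCs
  have hCsm : MeasurableSet Cs := MeasurableSet.iInter hAm
  have hPA : ∀ m, P ((A m)ᶜ) ≤ ρ := by
    intro m
    rw [hAcompl]
    exact extinct_bound P hRMeas hRIndep pk hId ρ hρ1 hfix m
  have hCc : P (Csᶜ) ≤ ρ := by
    rw [hCs, Set.compl_iInter]
    have hmono : Monotone (fun m => (A m)ᶜ) :=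
      monotone_nat_of_le_succ (fun m => Set.compl_subset_compl.mpr (hAanti m))
    rw [hmono.directed_le.measure_iUnion]
    exact iSup_le hPA
  have hPC : 1 - ρ ≤ P Cs := by
    have hcompl : P Cs = 1 - P (Csᶜ) := by
      rw [← prob_compl_eq_one_sub hCsm.compl, compl_compl]
    rw [hcompl]
    exact tsub_le_tsub_left hCc 1
  set B : Set Ω := {ω | R none ω ≠ 0} with hB
  have hBeq : B = {ω | R none ω = 0}ᶜ := by
    ext ω
    simp [hB]
  have hBmeas0 : MeasurableSet {ω | R none ω = 0} :=
    hRMeas none (measurableSet_singleton 0)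
  have hPB : P B = 1 - pk 0 := by
    rw [hBeq, prob_compl_eq_one_sub hBmeas0, hId none 0]
  have hpk0 : pk 0 < 1 := by
    rw [hpk]
    apply ENNReal.ofReal_lt_one.mpr
    have he : (n.choose 0 : ℝ) * p ^ 0 * (1 - p) ^ (n - 0) = (1 - p) ^ n := by simp
    rw [he]
    exact pow_lt_one₀ hq0 (by linarith) (by omega)
  have h_le : ∀ u : TdVertex d,
      MeasurableSpace.comap (R u) inferInstance ≤ ‹MeasurableSpace Ω› :=
    fun u => (hRMeas u).comap_le
  have hindep := ProbabilityTheory.indep_biSup_compl h_le hRIndep ({none} : Set (TdVertex d))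
  set m2 : MeasurableSpace Ω :=
    ⨆ u ∈ ({none} : Set (TdVertex d))ᶜ, MeasurableSpace.comap (R u) inferInstance with hm2
  have hm2le : ∀ (w : List (Fin d)) (v : ℕ), MeasurableSet[m2] {ω | R (inj d w) ω = v} := by
    intro w v
    have hle : MeasurableSpace.comap (R (inj d w)) inferInstance ≤ m2 := by
      rw [hm2]
      exact le_biSup (fun u : TdVertex d => MeasurableSpace.comap (R u) inferInstance)
        (show inj d w ∈ ({none} : Set (TdVertex d))ᶜ from fun hcon => by simp [inj] at hcon)
    exact hle _ ⟨{v}, measurableSet_singleton v, rfl⟩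
  have hCsm2 : MeasurableSet[m2] Cs := by
    rw [hCs]
    exact MeasurableSet.iInter (fun m =>
      measurableSet_genSet (m' := m2) hm2le m (fun s => s.Nonempty))
  have hBm1 : MeasurableSet[⨆ u ∈ ({none} : Set (TdVertex d)),
      MeasurableSpace.comap (R u) inferInstance] B := by
    have hle : MeasurableSpace.comap (R (none : TdVertex d)) inferInstance
        ≤ ⨆ u ∈ ({none} : Set (TdVertex d)), MeasurableSpace.comap (R u) inferInstance :=
      le_biSup (fun u : TdVertex d => MeasurableSpace.comap (R u) inferInstance)
        (Set.mem_singleton _)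
    exact hle _ ⟨{0}ᶜ, (measurableSet_singleton 0).compl, rfl⟩
  have hmul : P (B ∩ Cs) = P B * P Cs :=
    (ProbabilityTheory.Indep_iff _ _ P).mp hindep B Cs hBm1 hCsm2
  have hsub : B ∩ Cs ⊆ survival distFull (none : TdVertex d) R := by
    rintro ω ⟨hωB, hωC⟩
    have hne : ∀ m, (gen (RwF R ω) m).Nonempty := fun m => Set.mem_iInter.mp hωC m
    exact cluster_infinite_of R ω hωB hne
  have hpos : 0 < P (B ∩ Cs) := by
    rw [hmul, hPB]
    have h1 : 0 < 1 - pk 0 := tsub_pos_of_lt hpk0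
    have h2 : 0 < P Cs := lt_of_lt_of_le (tsub_pos_of_lt hρlt) hPC
    exact ENNReal.mul_pos h1.ne' h2.ne'
  exact lt_of_lt_of_le hpos (measure_mono hsub)
end
end
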